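/- arXiv:2305.07858 — 4 statements merged into one kernel-verified Lean document; each statement's English description precedes it below -/
import Mathlib

section
/- For all integers n ≥ 2 and N ≥ 1: (a) for every 1 ≤ k ≤ n−1 there exist nonnegative integers c_λ, indexed by the partitions λ of n, such that X_{P_n}^{(N)} − (k−1)·e_k·X_{P_{n−k}}^{(N)} = Σ_{λ ⊢ n} c_λ · e_{λ_1} e_{λ_2} ⋯ ; and (b) there exist nonnegative integers c_λ, indexed by the partitions λ of n, such that X_{P_n}^{(N)} − n·e_n = Σ_{λ ⊢ n} c_λ · e_{λ_1} e_{λ_2} ⋯ . -/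
open scoped Classical

noncomputable section

def chromPoly (N : ℕ) {V : Type} [Fintype V] [DecidableEq V] (G : SimpleGraph V) :
    MvPolynomial (Fin N) ℤ :=
  ∑ c ∈ Finset.univ.filter (fun c : V → Fin N => ∀ u v, G.Adj u v → c u ≠ c v),
    ∏ v, MvPolynomial.X (c v)

namespace ChromAux

open MvPolynomial Finset

variable {N : ℕ}

/-- Properness for the path: consecutive entries differ. -/
def PP {n : ℕ} (c : Fin n → Fin N) : Prop :=
  ∀ i j : Fin n, (i : ℕ) + 1 = (j : ℕ) → c i ≠ c j

def pw {n : ℕ} (c : Fin n → Fin N) : MvPolynomial (Fin N) ℤ := ∏ v, X (c v)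

lemma chromPoly_path (N n : ℕ) :
    chromPoly N (SimpleGraph.pathGraph n)
      = ∑ c ∈ univ.filter (fun c : Fin n → Fin N => PP c), pw c := by
  unfold chromPoly pw
  congr 1
  ext c
  simp only [mem_filter, mem_univ, true_and, SimpleGraph.pathGraph_adj, PP, Set.mem_setOf_eq, Finset.mem_filter_univ]
  constructor
  · intro h
    refine (@Finset.mem_filter _ _ (fun _ => Classical.propDecidable _) _ _).mpr ⟨mem_univ _, ?_⟩
    intro i j hij
    exact h i j (Or.inl hij)
  · intro h
    replace h := ((@Finset.mem_filter _ _ (fun _ => Classical.propDecidable _) _ _).mp h).2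
    rintro u v (h1 | h2)
    · exact h u v h1
    · exact (h v u h2).symm

lemma Xp_zero : chromPoly N (SimpleGraph.pathGraph 0) = 1 := by
  rw [chromPoly_path]
  have h1 : (univ.filter (fun c : Fin 0 → Fin N => PP c)) = univ := by
    apply filter_true_of_mem
    intro c _ i
    exact absurd i.2 (by omega)
  rw [h1]
  have : (univ : Finset (Fin 0 → Fin N)) = {finZeroElim} := by
    ext c
    simp [funext_iff]
  rw [this, sum_singleton]
  simp [pw]

lemma pw_cons {m : ℕ} (j : Fin N) (c : Fin m → Fin N) :
    pw (Fin.cons j c) = X j * pw c := by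
  unfold pw
  rw [Fin.prod_univ_succ]
  simp

lemma PP_cons {m : ℕ} (j : Fin N) (c : Fin (m + 1) → Fin N) :
    PP (Fin.cons j c) ↔ PP c ∧ c 0 ≠ j := by
  constructor
  · intro h
    refine ⟨fun i j' hij => ?_, ?_⟩
    · have := h i.succ j'.succ (by simp [Fin.val_succ]; omega)
      simpa using this
    · have := h 0 (Fin.succ 0) (by simp)
      simpa using Ne.symm this
  · rintro ⟨h, h0⟩ i j' hij
    induction i using Fin.cases with
    | zero =>
      have : j' = Fin.succ 0 := by
        apply Fin.ext
        simpa using hij.symm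
      rw [this]
      simpa using Ne.symm h0
    | succ i =>
      induction j' using Fin.cases with
      | zero => simp at hij
      | succ j'' =>
        simp only [Fin.cons_succ]
        apply h
        simp only [Fin.val_succ] at hij
        omega

end ChromAux

namespace ChromAux

open MvPolynomial Finset

variable {N : ℕ}

lemma sum_PP_succ {M : Type*} [AddCommMonoid M] (m : ℕ) (g : (Fin (m + 2) → Fin N) → M) :
    ∑ c ∈ univ.filter (fun c : Fin (m + 2) → Fin N => PP c), g c
      = ∑ j : Fin N, ∑ c ∈ univ.filter (fun c : Fin (m + 1) → Fin N => PP c ∧ c 0 ≠ j),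
          g (Fin.cons j c) := by
  rw [sum_filter]
  rw [← Fintype.sum_equiv (Fin.consEquiv (fun _ : Fin (m + 2) => Fin N))
      (fun p => if PP (Fin.cons p.1 p.2) then g (Fin.cons p.1 p.2) else 0)
      (fun c => if PP c then g c else 0) (fun p => rfl)]
  rw [Fintype.sum_prod_type]
  apply Finset.sum_congr rfl
  intro j _
  rw [sum_filter]
  apply Finset.sum_congr rfl
  intro c _
  rw [PP_cons]
  congr 1

/-- sum over proper path colorings of length m+1, weighted by `X (c 0) ^ r`. -/
def Y (N m r : ℕ) : MvPolynomial (Fin N) ℤ :=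
  ∑ c ∈ univ.filter (fun c : Fin (m + 1) → Fin N => PP c), (X (c 0)) ^ r * pw c

lemma Y_zero_r (r : ℕ) : Y N 0 r = psum (Fin N) ℤ (r + 1) := by
  unfold Y psum
  have h1 : (univ.filter (fun c : Fin 1 → Fin N => PP c)) = univ := by
    apply filter_true_of_mem
    intro c _ i j hij
    have hi := i.2
    have hj := j.2
    omega
  rw [h1]
  rw [← (Equiv.funUnique (Fin 1) (Fin N)).symm.sum_comp
      (fun c : Fin 1 → Fin N => (X (c 0) : MvPolynomial (Fin N) ℤ) ^ r * pw c)]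
  apply Finset.sum_congr rfl
  intro j _
  simp [pw, Equiv.funUnique, pow_succ]

lemma Y_zero (m : ℕ) : Y N m 0 = chromPoly N (SimpleGraph.pathGraph (m + 1)) := by
  rw [chromPoly_path]
  unfold Y
  simp

lemma Y_step (m r : ℕ) :
    Y N (m + 1) r
      = psum (Fin N) ℤ (r + 1) * chromPoly N (SimpleGraph.pathGraph (m + 1)) - Y N m (r + 1) := by
  unfold Y
  rw [sum_PP_succ m (fun c => (X (c 0)) ^ r * pw c)]
  rw [chromPoly_path]
  have key : ∀ j : Fin N,
      ∑ c ∈ univ.filter (fun c : Fin (m + 1) → Fin N => PP c ∧ c 0 ≠ j),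
        (X ((Fin.cons j c : Fin (m + 2) → Fin N) 0)) ^ r * pw (Fin.cons j c)
      = ∑ c ∈ univ.filter (fun c : Fin (m + 1) → Fin N => PP c),
          (X j ^ (r + 1) * pw c
            - if c 0 = j then X j ^ (r + 1) * pw c else 0) := by
    intro j
    rw [Finset.sum_filter, Finset.sum_filter]
    apply Finset.sum_congr rfl
    intro c _
    by_cases h : PP c
    · by_cases h0 : c 0 = j <;>
        simp [h, h0, pw_cons, Fin.cons_zero, pow_succ, mul_comm, mul_assoc, mul_left_comm]
    · simp [h]
  simp only [key]
  simp only [Finset.sum_sub_distrib]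
  congr 1
  · rw [psum, Finset.sum_mul_sum]
  · rw [Finset.sum_comm]
    apply Finset.sum_congr rfl
    intro c _
    simp

end ChromAux

namespace ChromAux

open MvPolynomial Finset

variable {N : ℕ}

/-- abbreviation -/
def Xp (N n : ℕ) : MvPolynomial (Fin N) ℤ := chromPoly N (SimpleGraph.pathGraph n)

lemma Xp_zero' : Xp N 0 = 1 := Xp_zero

lemma Y_formula (m r : ℕ) :
    Y N m r = ∑ k ∈ range (m + 1), (-1 : MvPolynomial (Fin N) ℤ) ^ k *
      (psum (Fin N) ℤ (k + 1 + r) * Xp N (m - k)) := by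
  induction m generalizing r with
  | zero =>
    simp [Y_zero_r, Xp_zero', add_comm]
  | succ m ih =>
    rw [Y_step, ih (r + 1), Finset.sum_range_succ' _ (m + 1)]
    have e1 : ∀ k, (-1 : MvPolynomial (Fin N) ℤ) ^ (k + 1) *
          (psum (Fin N) ℤ (k + 1 + 1 + r) * Xp N (m + 1 - (k + 1)))
        = -((-1) ^ k * (psum (Fin N) ℤ (k + 1 + (r + 1)) * Xp N (m - k))) := by
      intro k
      have h2 : k + 1 + 1 + r = k + 1 + (r + 1) := by omega
      rw [h2, Nat.succ_sub_succ, pow_succ]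
      ring
    simp only [e1]
    rw [Finset.sum_neg_distrib]
    rw [sub_eq_neg_add]
    norm_num
    rw [add_comm 1 r]
    rfl

/-- The signed power-sum recurrence for paths. -/
lemma R1 (m : ℕ) :
    Xp N (m + 1) = ∑ k ∈ range (m + 1), (-1 : MvPolynomial (Fin N) ℤ) ^ k *
      (psum (Fin N) ℤ (k + 1) * Xp N (m - k)) := by
  have := Y_formula (N := N) m 0
  rw [Y_zero] at this
  simpa [Xp] using this

end ChromAux

namespace ChromAux

open MvPolynomial Finset

variable {N : ℕ}

/-- signed power sums with `q 0 = 1`. -/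
def q (N d : ℕ) : MvPolynomial (Fin N) ℤ :=
  if d = 0 then 1 else (-1) ^ d * psum (Fin N) ℤ d

lemma NLem (b : ℕ) :
    ∑ d ∈ range (b + 1), q N d * esymm (Fin N) ℤ (b - d)
      = (1 - (b : MvPolynomial (Fin N) ℤ)) * esymm (Fin N) ℤ b := by
  rw [Finset.sum_range_succ' _ b]
  have hq0 : q N 0 * esymm (Fin N) ℤ (b - 0) = esymm (Fin N) ℤ b := by
    simp [q]
  rw [hq0]
  have hA : ∑ a ∈ (Finset.HasAntidiagonal.antidiagonal b).filter (fun a => a.1 < b),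
      (-1 : MvPolynomial (Fin N) ℤ) ^ a.1 * esymm (Fin N) ℤ a.1 * psum (Fin N) ℤ a.2
      = ∑ k ∈ range b, (-1 : MvPolynomial (Fin N) ℤ) ^ k * esymm (Fin N) ℤ k
          * psum (Fin N) ℤ (b - k) := by
    rw [sum_filter, Finset.Nat.sum_antidiagonal_eq_sum_range_succ_mk, Finset.sum_range_succ]
    simp only [lt_irrefl, if_false, add_zero]
    apply Finset.sum_congr rfl
    intro k hk
    rw [if_pos (mem_range.mp hk)]
  have hm := MvPolynomial.mul_esymm_eq_sum (Fin N) ℤ b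
  rw [hA] at hm
  have hrefl : ∑ d ∈ range b, q N (d + 1) * esymm (Fin N) ℤ (b - (d + 1))
      = -((-1 : MvPolynomial (Fin N) ℤ) ^ (b + 1) *
          ∑ k ∈ range b, (-1 : MvPolynomial (Fin N) ℤ) ^ k * esymm (Fin N) ℤ k
            * psum (Fin N) ℤ (b - k)) := by
    rw [← Finset.sum_range_reflect]
    rw [Finset.mul_sum, ← Finset.sum_neg_distrib]
    apply Finset.sum_congr rfl
    intro d hd
    have hdb : d < b := mem_range.mp hd
    have h1 : b - 1 - d + 1 = b - d := by omega
    rw [q, if_neg (Nat.succ_ne_zero _), h1]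
    have h2 : b - (b - d) = d := by omega
    rw [h2]
    have h3 : -((-1 : MvPolynomial (Fin N) ℤ) ^ (b + 1) * (-1) ^ d) = (-1) ^ (b - d) := by
      rw [← pow_add]
      have h4 : b + 1 + d = b - d + 2 * d + 1 := by omega
      rw [h4, pow_add, pow_add, pow_mul]
      norm_num
    rw [← h3]
    ring
  rw [hrefl, ← hm]
  ring

lemma Qdelta (m : ℕ) :
    ∑ d ∈ range (m + 1), q N d * Xp N (m - d)
      = if m = 0 then 1 else 0 := by
  cases m with
  | zero => simp [q, Xp_zero']
  | succ m =>
    rw [if_neg (Nat.succ_ne_zero _)]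
    rw [Finset.sum_range_succ' _ (m + 1)]
    have hq0 : q N 0 * Xp N (m + 1 - 0) = Xp N (m + 1) := by simp [q]
    rw [hq0]
    have h1 : ∑ d ∈ range (m + 1), q N (d + 1) * Xp N (m + 1 - (d + 1))
        = -Xp N (m + 1) := by
      rw [R1 m]
      rw [← Finset.sum_neg_distrib]
      apply Finset.sum_congr rfl
      intro d hd
      rw [q, if_neg (Nat.succ_ne_zero _), Nat.succ_sub_succ, pow_succ]
      ring
    rw [h1]
    ring

end ChromAux

namespace ChromAux

open MvPolynomial Finset

variable {N : ℕ}

lemma ClaimA (n : ℕ) :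
    ∑ b ∈ range (n + 1), (1 - (Nat.cast b : MvPolynomial (Fin N) ℤ))
        * (esymm (Fin N) ℤ b * Xp N (n - b))
      = esymm (Fin N) ℤ n := by
  have h1 : ∀ b : ℕ, (1 - (b : MvPolynomial (Fin N) ℤ)) * (esymm (Fin N) ℤ b * Xp N (n - b))
      = ∑ d ∈ Finset.Ico 0 (b + 1), q N (b - d) * esymm (Fin N) ℤ d * Xp N (n - b) := by
    intro b
    rw [← Finset.range_eq_Ico, ← Finset.sum_range_reflect]
    have h2 : ∀ d ∈ range (b + 1),
        q N (b - (b + 1 - 1 - d)) * esymm (Fin N) ℤ (b + 1 - 1 - d) * Xp N (n - b)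
        = q N d * esymm (Fin N) ℤ (b - d) * Xp N (n - b) := by
      intro d hd
      have hdb : d < b + 1 := mem_range.mp hd
      have e1 : b + 1 - 1 - d = b - d := by omega
      have e2 : b - (b - d) = d := by omega
      rw [e1, e2]
    rw [Finset.sum_congr rfl h2, ← Finset.sum_mul, NLem, mul_assoc]
  rw [Finset.range_eq_Ico]
  rw [Finset.sum_congr rfl (fun b (_ : b ∈ Finset.Ico 0 (n + 1)) => h1 b)]
  rw [← Finset.sum_Ico_Ico_comm]
  have h4 : ∀ d ∈ Finset.Ico 0 (n + 1),
      ∑ b ∈ Finset.Ico d (n + 1), q N (b - d) * esymm (Fin N) ℤ d * Xp N (n - b)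
      = esymm (Fin N) ℤ d * (if n - d = 0 then 1 else 0) := by
    intro d hd
    have hdn : d ≤ n := by
      have := (Finset.mem_Ico.mp hd).2; omega
    rw [Finset.sum_Ico_eq_sum_range]
    have h3 : ∀ c ∈ range (n + 1 - d),
        q N (d + c - d) * esymm (Fin N) ℤ d * Xp N (n - (d + c))
        = esymm (Fin N) ℤ d * (q N c * Xp N (n - d - c)) := by
      intro c hc
      have e1 : d + c - d = c := by omega
      have e2 : n - (d + c) = n - d - c := by omega
      rw [e1, e2]
      ring
    rw [Finset.sum_congr rfl h3, ← Finset.mul_sum]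
    congr 1
    have e3 : n + 1 - d = (n - d) + 1 := by omega
    rw [e3, Qdelta]
  rw [Finset.sum_congr rfl h4]
  rw [Finset.sum_eq_single_of_mem n (by simp)]
  · simp
  · intro d hd hdn
    have : n - d ≠ 0 := by
      have h5 := (Finset.mem_Ico.mp hd).2
      omega
    rw [if_neg this, mul_zero]
  

lemma MAIN (n : ℕ) :
    Xp N n = esymm (Fin N) ℤ n
      + ∑ b ∈ Finset.Icc 1 n, (b - 1) • (esymm (Fin N) ℤ b * Xp N (n - b)) := by
  have hA := ClaimA (N := N) n
  have hsplit : range (n + 1) = insert 0 (Finset.Icc 1 n) := by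
    ext x
    simp only [Finset.mem_range, Finset.mem_insert, Finset.mem_Icc]
    omega
  rw [hsplit, Finset.sum_insert (by simp)] at hA
  simp only [Nat.cast_zero, sub_zero, one_mul, esymm_zero, Nat.sub_zero] at hA
  have h2 : ∀ b ∈ Finset.Icc 1 n,
      -((1 - (b : MvPolynomial (Fin N) ℤ)) * (esymm (Fin N) ℤ b * Xp N (n - b)))
      = (b - 1) • (esymm (Fin N) ℤ b * Xp N (n - b)) := by
    intro b hb
    have hb1 : 1 ≤ b := (Finset.mem_Icc.mp hb).1
    rw [nsmul_eq_mul, Nat.cast_sub hb1, Nat.cast_one]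
    ring
  have h3 : Xp N n = esymm (Fin N) ℤ n
      - ∑ b ∈ Finset.Icc 1 n, (1 - (b : MvPolynomial (Fin N) ℤ))
          * (esymm (Fin N) ℤ b * Xp N (n - b)) := by
    rw [← hA]; ring
  rw [h3, sub_eq_add_neg, ← Finset.sum_neg_distrib, Finset.sum_congr rfl h2]

end ChromAux

namespace ChromAux

open MvPolynomial Finset

variable {N : ℕ}

/-- `A` is a nonnegative integer combination of `e_λ`, `λ ⊢ n`. -/
def isEP (N n : ℕ) (A : MvPolynomial (Fin N) ℤ) : Prop :=
  ∃ c : n.Partition → ℕ,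
    A = ∑ P : n.Partition, c P • (P.parts.map (MvPolynomial.esymm (Fin N) ℤ)).prod

lemma isEP_add {n : ℕ} {A B : MvPolynomial (Fin N) ℤ} (hA : isEP N n A) (hB : isEP N n B) :
    isEP N n (A + B) := by
  obtain ⟨a, rfl⟩ := hA
  obtain ⟨b, rfl⟩ := hB
  refine ⟨fun P => a P + b P, ?_⟩
  rw [← Finset.sum_add_distrib]
  apply Finset.sum_congr rfl
  intro P _
  rw [add_smul]

lemma isEP_zero {n : ℕ} : isEP N n (0 : MvPolynomial (Fin N) ℤ) :=
  ⟨fun _ => 0, by simp⟩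

lemma isEP_nsmul {n : ℕ} {A : MvPolynomial (Fin N) ℤ} (m : ℕ) (hA : isEP N n A) :
    isEP N n (m • A) := by
  obtain ⟨a, rfl⟩ := hA
  refine ⟨fun P => m * a P, ?_⟩
  rw [Finset.smul_sum]
  apply Finset.sum_congr rfl
  intro P _
  rw [mul_smul]

lemma isEP_sum {n : ℕ} {ι : Type*} (s : Finset ι) (f : ι → MvPolynomial (Fin N) ℤ)
    (h : ∀ i ∈ s, isEP N n (f i)) : isEP N n (∑ i ∈ s, f i) := by
  classical
  induction s using Finset.induction_on with
  | empty => simpa using isEP_zero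
  | insert _ _ hx ih =>
    rename_i x s'
    rw [Finset.sum_insert hx]
    exact isEP_add (h x (Finset.mem_insert_self x s'))
      (ih (fun i hi => h i (Finset.mem_insert_of_mem hi)))

lemma isEP_basis {n : ℕ} (P : n.Partition) :
    isEP N n ((P.parts.map (MvPolynomial.esymm (Fin N) ℤ)).prod) := by
  refine ⟨fun Q => if Q = P then 1 else 0, ?_⟩
  simp [ite_smul]

lemma isEP_congr {m n : ℕ} (h : m = n) {A : MvPolynomial (Fin N) ℤ} (hA : isEP N m A) :
    isEP N n A := by
  subst h; exact hA

/-- prepending a part to a partition -/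
def insertPart {m : ℕ} (j : ℕ) (hj : 0 < j) (P : m.Partition) : (j + m).Partition where
  parts := j ::ₘ P.parts
  parts_pos := by
    intro i hi
    rcases Multiset.mem_cons.mp hi with h | h
    · subst h; exact hj
    · exact P.parts_pos h
  parts_sum := by
    rw [Multiset.sum_cons, P.parts_sum]

lemma isEP_esymm_mul {m : ℕ} (j : ℕ) (hj : 0 < j) {A : MvPolynomial (Fin N) ℤ}
    (hA : isEP N m A) : isEP N (j + m) (MvPolynomial.esymm (Fin N) ℤ j * A) := by
  obtain ⟨a, rfl⟩ := hA
  rw [Finset.mul_sum]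
  apply isEP_sum
  intro P _
  have h1 : MvPolynomial.esymm (Fin N) ℤ j
        * ((P.parts.map (MvPolynomial.esymm (Fin N) ℤ)).prod)
      = (((insertPart j hj P).parts.map (MvPolynomial.esymm (Fin N) ℤ)).prod) := by
    simp [insertPart]
  rw [mul_smul_comm, h1]
  exact isEP_nsmul _ (isEP_basis _)

end ChromAux

namespace ChromAux

open MvPolynomial Finset

variable {N : ℕ}

lemma isEP_esymm (n : ℕ) : isEP N n (MvPolynomial.esymm (Fin N) ℤ n) := by
  have h := isEP_basis (N := N) (Nat.Partition.indiscrete n)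
  rcases Nat.eq_zero_or_pos n with h0 | h0
  · subst h0
    have hp : (Nat.Partition.indiscrete 0).parts = 0 := by
      simp [Nat.Partition.indiscrete, Nat.Partition.ofSums]
    rw [hp] at h
    simpa using h
  · rw [Nat.Partition.indiscrete_parts (by omega)] at h
    simpa using h

lemma isEP_Xp : ∀ n, isEP N n (Xp N n) := by
  intro n
  induction n using Nat.strong_induction_on with
  | _ n ih =>
    rw [MAIN]
    apply isEP_add (isEP_esymm n)
    apply isEP_sum
    intro b hb
    obtain ⟨hb1, hb2⟩ := Finset.mem_Icc.mp hb
    apply isEP_nsmul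
    apply isEP_congr (show b + (n - b) = n by omega)
    exact isEP_esymm_mul b hb1 (ih (n - b) (by omega))

end ChromAux

/-- For all `n ≥ 2` and `N ≥ 1`:
(a) for every `1 ≤ k ≤ n−1` the difference `X_{P_n} − (k−1)·e_k·X_{P_{n−k}}` is a
nonnegative integer combination of the products `e_λ = e_{λ₁}e_{λ₂}⋯` over partitions
`λ ⊢ n`; and (b) so is `X_{P_n} − n·e_n`. -/
theorem chromPoly_pathGraph_sub_ePositive (n N : ℕ) (hn : 2 ≤ n) (hN : 1 ≤ N) :
    (∀ k, 1 ≤ k → k ≤ n - 1 →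
      ∃ c : n.Partition → ℕ,
        chromPoly N (SimpleGraph.pathGraph n)
            - (k - 1) • (MvPolynomial.esymm (Fin N) ℤ k *
                chromPoly N (SimpleGraph.pathGraph (n - k)))
          = ∑ P : n.Partition, c P • (P.parts.map (MvPolynomial.esymm (Fin N) ℤ)).prod) ∧
    (∃ c : n.Partition → ℕ,
      chromPoly N (SimpleGraph.pathGraph n) - n • MvPolynomial.esymm (Fin N) ℤ n
        = ∑ P : n.Partition, c P • (P.parts.map (MvPolynomial.esymm (Fin N) ℤ)).prod) := by
  have hterm : ∀ b ∈ Finset.Icc 1 n, ∀ s : Finset ℕ,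
      ChromAux.isEP N n ((b - 1) • (MvPolynomial.esymm (Fin N) ℤ b * ChromAux.Xp N (n - b))) := by
    intro b hb _
    obtain ⟨hb1, hb2⟩ := Finset.mem_Icc.mp hb
    apply ChromAux.isEP_nsmul
    apply ChromAux.isEP_congr (show b + (n - b) = n by omega)
    exact ChromAux.isEP_esymm_mul b hb1 (ChromAux.isEP_Xp (n - b))
  constructor
  · intro k hk1 hk2
    have hkIcc : k ∈ Finset.Icc 1 n := Finset.mem_Icc.mpr ⟨hk1, by omega⟩
    have hsum := ChromAux.MAIN (N := N) n
    rw [← Finset.add_sum_erase _ _ hkIcc] at hsum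
    have heq : ChromAux.Xp N n - (k - 1) • (MvPolynomial.esymm (Fin N) ℤ k * ChromAux.Xp N (n - k))
        = MvPolynomial.esymm (Fin N) ℤ n + ∑ b ∈ (Finset.Icc 1 n).erase k,
            (b - 1) • (MvPolynomial.esymm (Fin N) ℤ b * ChromAux.Xp N (n - b)) := by
      rw [hsum]; abel
    have hEP : ChromAux.isEP N n (ChromAux.Xp N n
        - (k - 1) • (MvPolynomial.esymm (Fin N) ℤ k * ChromAux.Xp N (n - k))) := by
      rw [heq]
      apply ChromAux.isEP_add (ChromAux.isEP_esymm n)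
      apply ChromAux.isEP_sum
      intro b hb
      exact hterm b (Finset.mem_of_mem_erase hb) ∅
    obtain ⟨c, hc⟩ := hEP
    exact ⟨c, hc⟩
  · have hnIcc : n ∈ Finset.Icc 1 n := Finset.mem_Icc.mpr ⟨by omega, le_refl n⟩
    have hsum := ChromAux.MAIN (N := N) n
    rw [← Finset.add_sum_erase _ _ hnIcc] at hsum
    rw [Nat.sub_self, ChromAux.Xp_zero', mul_one] at hsum
    have hns : (n : ℕ) • MvPolynomial.esymm (Fin N) ℤ n
        = MvPolynomial.esymm (Fin N) ℤ n + (n - 1) • MvPolynomial.esymm (Fin N) ℤ n := by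
      have hsplit : n = 1 + (n - 1) := by omega
      nth_rewrite 1 [hsplit]
      rw [add_nsmul, one_nsmul]
    have heq : ChromAux.Xp N n - n • MvPolynomial.esymm (Fin N) ℤ n
        = ∑ b ∈ (Finset.Icc 1 n).erase n,
            (b - 1) • (MvPolynomial.esymm (Fin N) ℤ b * ChromAux.Xp N (n - b)) := by
      rw [hsum, hns]; abel
    have hEP : ChromAux.isEP N n (ChromAux.Xp N n - n • MvPolynomial.esymm (Fin N) ℤ n) := by
      rw [heq]
      apply ChromAux.isEP_sum
      intro b hb
      exact hterm b (Finset.mem_of_mem_erase hb) ∅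
    obtain ⟨c, hc⟩ := hEP
    exact ⟨c, hc⟩

end
end

section
/- For every integer k ≥ 1 and every N ≥ 2k, there do not exist nonnegative rational numbers c_λ, indexed by the partitions λ of 2k, such that X_{P_{2k}}^{(N)} − k·e_k·X_{P_k}^{(N)} = Σ_{λ ⊢ 2k} c_λ · e_{λ_1} e_{λ_2} ⋯ . (Indeed the coefficient of e_{(k,k)} in the e-expansion of this difference equals −k.) -/
open scoped Classical

noncomputable section

/-- The chromatic symmetric polynomial `X_G^{(N)}` of a finite simple graph `G`, with rational
coefficients: the sum over all proper colorings `c : V → {1,…,N}` of `∏_{v ∈ V} x_{c v}`. -/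
def chromPolyQ (N : ℕ) {V : Type} [Fintype V] [DecidableEq V] (G : SimpleGraph V) :
    MvPolynomial (Fin N) ℚ :=
  ∑ c ∈ Finset.univ.filter (fun c : V → Fin N => ∀ u v, G.Adj u v → c u ≠ c v),
    ∏ v, MvPolynomial.X (c v)

namespace ChromAux

open Finset

variable {k N : ℕ} {ω : ℂ}


lemma pow_mod (hω : IsPrimitiveRoot ω k) (m : ℕ) : ω ^ (m % k) = ω ^ m := by
  conv_rhs => rw [← Nat.div_add_mod m k]
  rw [pow_add, pow_mul, hω.pow_eq_one, one_pow, one_mul]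

variable [NeZero k]

lemma phi_add (hω : IsPrimitiveRoot ω k) (a b : ZMod k) :
    ω ^ (a + b).val = ω ^ a.val * ω ^ b.val := by
  rw [ZMod.val_add, pow_mod hω, pow_add]

lemma phi_sum (hω : IsPrimitiveRoot ω k) {ι : Type*} (s : Finset ι) (f : ι → ZMod k) :
    ω ^ (∑ r ∈ s, f r).val = ∏ r ∈ s, ω ^ (f r).val := by
  induction s using Finset.cons_induction with
  | empty => simp
  | cons a s ha ih => rw [Finset.sum_cons, Finset.prod_cons, phi_add hω, ih]

lemma sum_zmod (hω : IsPrimitiveRoot ω k) (e : ℕ) :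
    ∑ a : ZMod k, (ω ^ a.val) ^ e = if k ∣ e then (k : ℂ) else 0 := by
  have h1 : ∑ a : ZMod k, (ω ^ a.val) ^ e = ∑ j ∈ Finset.range k, (ω ^ e) ^ j := by
    refine Finset.sum_nbij' (fun a => a.val) (fun n => (n : ZMod k)) ?_ ?_ ?_ ?_ ?_
    · intro a _; exact Finset.mem_range.2 a.val_lt
    · intro n _; exact Finset.mem_univ _
    · intro a _; exact ZMod.natCast_rightInverse a
    · intro n hn; exact ZMod.val_cast_of_lt (Finset.mem_range.1 hn)
    · intro a _; rw [← pow_mul, mul_comm, pow_mul]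
  rw [h1]
  by_cases hd : k ∣ e
  · rw [if_pos hd, (hω.pow_eq_one_iff_dvd e).2 hd]
    simp
  · rw [if_neg hd, geom_sum_eq (fun h => hd ((hω.pow_eq_one_iff_dvd e).1 h)) k,
      ← pow_mul, mul_comm, pow_mul, hω.pow_eq_one, one_pow, sub_self, zero_div]

lemma sum_nonzero (hω : IsPrimitiveRoot ω k) (e : ℕ) :
    ∑ d ∈ (Finset.univ : Finset (ZMod k)).erase 0, (ω ^ d.val) ^ e
      = (if k ∣ e then (k : ℂ) else 0) - 1 := by
  have h := Finset.add_sum_erase Finset.univ (fun d : ZMod k => (ω ^ d.val) ^ e)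
    (Finset.mem_univ 0)
  rw [← sum_zmod hω e, ← h]
  simp



/-- the evaluation point -/
def pt (k N : ℕ) (ω : ℂ) : Fin N → ℂ := fun i => if (i : ℕ) < k then ω ^ (i : ℕ) else 0

/-- partial sums encoding -/
def encZ {k m : ℕ} (a : ZMod k) (d : Fin m → ZMod k) : Fin (m + 1) → ZMod k :=
  fun i => a + ∑ r ∈ Finset.univ.filter (fun r : Fin m => (r : ℕ) < (i : ℕ)), d r

lemma encZ_zero {m : ℕ} (a : ZMod k) (d : Fin m → ZMod k) : encZ a d 0 = a := by
  simp [encZ]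

lemma filter_succ {m : ℕ} (i : Fin m) :
    Finset.univ.filter (fun r : Fin m => (r : ℕ) < ((i.succ : Fin (m+1)) : ℕ))
      = insert i (Finset.univ.filter (fun r : Fin m => (r : ℕ) < ((i.castSucc : Fin (m+1)) : ℕ))) := by
  ext r
  simp only [Finset.mem_filter, Finset.mem_univ, true_and, Finset.mem_insert, Fin.val_succ,
    Fin.coe_castSucc, Fin.ext_iff]
  omega

lemma encZ_succ {m : ℕ} (a : ZMod k) (d : Fin m → ZMod k) (i : Fin m) :
    encZ a d i.succ = encZ a d i.castSucc + d i := by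
  rw [encZ, encZ, filter_succ, Finset.sum_insert (by simp)]
  ring

lemma encZ_telescope {m : ℕ} (c : Fin (m + 1) → ZMod k) (i : Fin (m + 1)) :
    encZ (c 0) (fun r => c r.succ - c r.castSucc) i = c i := by
  induction i using Fin.induction with
  | zero => exact encZ_zero _ _
  | succ r ih => rw [encZ_succ, ih, add_sub_cancel]

/-- properness of a coloring of the path graph in terms of consecutive vertices -/
lemma proper_iff {n : ℕ} {α : Type*} (c : Fin (n + 1) → α) :
    (∀ u v, (SimpleGraph.pathGraph (n + 1)).Adj u v → c u ≠ c v)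
      ↔ ∀ r : Fin n, c r.castSucc ≠ c r.succ := by
  constructor
  · intro h r
    exact h _ _ (SimpleGraph.pathGraph_adj.2 (Or.inl (by simp)))
  · intro h u v hadj
    rcases SimpleGraph.pathGraph_adj.1 hadj with h1 | h1
    · have hu : (u : ℕ) < n := by omega
      have hu2 : u = (⟨(u : ℕ), hu⟩ : Fin n).castSucc := by simp [Fin.ext_iff]
      have hv : v = (⟨(u : ℕ), hu⟩ : Fin n).succ := by simp [Fin.ext_iff]; omega
      rw [hu2]
      conv_rhs => rw [hv]
      exact h _
    · have hv : (v : ℕ) < n := by omega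
      have hu' : u = (⟨(v : ℕ), hv⟩ : Fin n).succ := by simp [Fin.ext_iff]; omega
      have hv' : v = (⟨(v : ℕ), hv⟩ : Fin n).castSucc := by simp [Fin.ext_iff]
      rw [hu']
      conv_rhs => rw [hv']
      exact (h _).symm

variable [NeZero k]

def enc (hkN : k ≤ N) {m : ℕ} (a : ZMod k) (d : Fin m → ZMod k) : Fin (m + 1) → Fin N :=
  fun i => ⟨(encZ a d i).val, lt_of_lt_of_le (ZMod.val_lt _) hkN⟩

lemma z_enc (hkN : k ≤ N) {m : ℕ} (a : ZMod k) (d : Fin m → ZMod k) (i : Fin (m + 1)) :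
    (((enc hkN a d i : Fin N) : ℕ) : ZMod k) = encZ a d i :=
  ZMod.natCast_rightInverse _


variable [NeZero k]


lemma card_gt {m : ℕ} (r : Fin m) :
    ((Finset.univ : Finset (Fin (m+1))).filter (fun i : Fin (m+1) => (r : ℕ) < (i : ℕ))).card = m - r := by
  have h : (Finset.univ : Finset (Fin (m+1))).filter (fun i : Fin (m+1) => (r : ℕ) < (i : ℕ))
      = Finset.Ioi (r.castSucc) := by
    ext i
    simp [Finset.mem_Ioi, Fin.lt_def]
  rw [h, Fin.card_Ioi]
  simp

lemma weight_eq (hω : IsPrimitiveRoot ω k) {m : ℕ} (a : ZMod k) (d : Fin m → ZMod k) :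
    ∏ i : Fin (m+1), ω ^ (encZ a d i).val
      = (ω ^ a.val) ^ (m+1) * ∏ r : Fin m, (ω ^ (d r).val) ^ (m - (r : ℕ)) := by
  have h1 : ∀ i : Fin (m+1), ω ^ (encZ a d i).val
      = ω ^ a.val * ∏ r ∈ Finset.univ.filter (fun r : Fin m => (r : ℕ) < (i : ℕ)), ω ^ (d r).val := by
    intro i
    rw [encZ, phi_add hω, phi_sum hω]
  calc ∏ i : Fin (m+1), ω ^ (encZ a d i).val
      = ∏ i : Fin (m+1), (ω ^ a.val *
          ∏ r ∈ Finset.univ.filter (fun r : Fin m => (r : ℕ) < (i : ℕ)), ω ^ (d r).val) :=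
        Finset.prod_congr rfl (fun i _ => h1 i)
    _ = (ω ^ a.val) ^ (m+1) * ∏ i : Fin (m+1),
          ∏ r ∈ Finset.univ.filter (fun r : Fin m => (r : ℕ) < (i : ℕ)), ω ^ (d r).val := by
        rw [Finset.prod_mul_distrib, Finset.prod_const, Finset.card_univ, Fintype.card_fin]
    _ = (ω ^ a.val) ^ (m+1) * ∏ r : Fin m, (ω ^ (d r).val) ^ (m - (r : ℕ)) := by
        congr 1
        have hcomm : ∏ i : Fin (m+1),
            ∏ r ∈ Finset.univ.filter (fun r : Fin m => (r : ℕ) < (i : ℕ)), ω ^ (d r).val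
            = ∏ r : Fin m, ∏ _i ∈ (Finset.univ : Finset (Fin (m+1))).filter
                (fun i : Fin (m+1) => (r : ℕ) < (i : ℕ)), ω ^ (d r).val :=
          Finset.prod_comm' (by intro i r; simp)
        rw [hcomm]
        exact Finset.prod_congr rfl (fun r _ => by rw [Finset.prod_const, card_gt])

lemma chrom_eval (hω : IsPrimitiveRoot ω k) (hkN : k ≤ N) (m : ℕ) :
    MvPolynomial.aeval (pt k N ω) (chromPolyQ N (SimpleGraph.pathGraph (m+1)))
      = (if k ∣ (m+1) then (k : ℂ) else 0)
        * ∏ r ∈ Finset.range m, (if k ∣ (r+1) then (k : ℂ) - 1 else -1) := by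
  classical
  -- push aeval inside
  rw [chromPolyQ, map_sum]
  simp only [map_prod, MvPolynomial.aeval_X, Finset.filter_congr_decidable]
  -- restrict to colorings with small values
  refine Eq.trans (Eq.symm (Finset.sum_subset (s₁ := Finset.univ.filter
      (fun c : Fin (m+1) → Fin N =>
        (∀ u v, (SimpleGraph.pathGraph (m+1)).Adj u v → c u ≠ c v) ∧ ∀ v, ((c v : ℕ) < k)))
      ?_ ?_)) ?_
  · intro c hc
    simp only [Finset.mem_filter] at hc ⊢
    exact ⟨Finset.mem_univ c, hc.2.1⟩
  · intro c hc hc1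
    simp only [Finset.mem_filter] at hc hc1
    push_neg at hc1
    obtain ⟨v, hv⟩ := hc1 (Finset.mem_univ c) hc.2
    refine Finset.prod_eq_zero (Finset.mem_univ v) ?_
    rw [pt, if_neg (by omega)]
  -- bijection with (a, d) data
  have hbij : ∑ c ∈ Finset.univ.filter
      (fun c : Fin (m+1) → Fin N =>
        (∀ u v, (SimpleGraph.pathGraph (m+1)).Adj u v → c u ≠ c v) ∧ ∀ v, ((c v : ℕ) < k)),
      (∏ v : Fin (m+1), pt k N ω (c v))
      = ∑ p ∈ (Finset.univ : Finset (ZMod k)) ×ˢ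
          Fintype.piFinset (fun _ : Fin m => (Finset.univ : Finset (ZMod k)).erase 0),
        ∏ i : Fin (m+1), ω ^ (encZ p.1 p.2 i).val := by
    refine Finset.sum_nbij'
      (fun c => ((((c 0 : Fin N) : ℕ) : ZMod k),
        fun r : Fin m => (((c r.succ : Fin N) : ℕ) : ZMod k) - (((c r.castSucc : Fin N) : ℕ) : ZMod k)))
      (fun p => enc hkN p.1 p.2) ?_ ?_ ?_ ?_ ?_
    · -- maps into T
      intro c hc
      rw [Finset.mem_filter] at hc
      obtain ⟨-, hprop, hlt⟩ := hc
      rw [Finset.mem_product]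
      refine ⟨Finset.mem_univ _, ?_⟩
      rw [Fintype.mem_piFinset]
      intro r
      rw [Finset.mem_erase]
      refine ⟨sub_ne_zero.2 ?_, Finset.mem_univ _⟩
      intro heq
      have h1 : ((c r.succ : Fin N) : ℕ) = ((c r.castSucc : Fin N) : ℕ) := by
        have := congrArg ZMod.val heq
        rwa [ZMod.val_cast_of_lt (hlt _), ZMod.val_cast_of_lt (hlt _)] at this
      exact ((proper_iff c).1 hprop r) (Fin.ext h1).symm
    · -- inverse maps into F₁
      intro p hp
      rw [Finset.mem_product, Fintype.mem_piFinset] at hp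
      rw [Finset.mem_filter]
      refine ⟨Finset.mem_univ _, (proper_iff _).2 ?_, fun v => ZMod.val_lt _⟩
      intro r heq
      have h1 : encZ p.1 p.2 r.castSucc = encZ p.1 p.2 r.succ := by
        have := congrArg (fun v : Fin N => ((v : ℕ) : ZMod k)) heq
        simpa only [z_enc] using this
      rw [encZ_succ] at h1
      have h2 : p.2 r = 0 := by
        have := left_eq_add.1 h1
        exact this
      exact (Finset.mem_erase.1 (hp.2 r)).1 h2
    · -- left inverse
      intro c hc
      rw [Finset.mem_filter] at hc
      funext i
      apply Fin.ext
      show (encZ _ _ i).val = ((c i : Fin N) : ℕ)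
      rw [encZ_telescope (fun i => (((c i : Fin N) : ℕ) : ZMod k)) i,
        ZMod.val_cast_of_lt (hc.2.2 i)]
    · -- right inverse
      intro p hp
      ext : 1
      · show (((enc hkN p.1 p.2 0 : Fin N) : ℕ) : ZMod k) = p.1
        rw [z_enc, encZ_zero]
      · funext r
        show (((enc hkN p.1 p.2 r.succ : Fin N) : ℕ) : ZMod k)
            - (((enc hkN p.1 p.2 r.castSucc : Fin N) : ℕ) : ZMod k) = p.2 r
        rw [z_enc, z_enc, encZ_succ, add_sub_cancel_left]
    · -- weights agree
      intro c hc
      rw [Finset.mem_filter] at hc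
      refine Finset.prod_congr rfl (fun i _ => ?_)
      show pt k N ω (c i) = ω ^ (encZ _ _ i).val
      rw [encZ_telescope (fun i => (((c i : Fin N) : ℕ) : ZMod k)) i,
        ZMod.val_cast_of_lt (hc.2.2 i), pt, if_pos (hc.2.2 i)]
  rw [hbij, Finset.sum_product]
  have hw : ∀ a : ZMod k, ∀ d : Fin m → ZMod k,
      ∏ i : Fin (m+1), ω ^ (encZ a d i).val
        = (ω ^ a.val) ^ (m+1) * ∏ r : Fin m, (ω ^ (d r).val) ^ (m - (r : ℕ)) :=
    fun a d => weight_eq hω a d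
  calc ∑ a : ZMod k, ∑ d ∈ Fintype.piFinset (fun _ : Fin m => (Finset.univ : Finset (ZMod k)).erase 0),
        ∏ i : Fin (m+1), ω ^ (encZ a d i).val
      = ∑ a : ZMod k, ∑ d ∈ Fintype.piFinset (fun _ : Fin m => (Finset.univ : Finset (ZMod k)).erase 0),
        ((ω ^ a.val) ^ (m+1) * ∏ r : Fin m, (ω ^ (d r).val) ^ (m - (r : ℕ))) :=
        Finset.sum_congr rfl (fun a _ => Finset.sum_congr rfl (fun d _ => hw a d))
    _ = (∑ a : ZMod k, (ω ^ a.val) ^ (m+1)) *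
        (∑ d ∈ Fintype.piFinset (fun _ : Fin m => (Finset.univ : Finset (ZMod k)).erase 0),
          ∏ r : Fin m, (ω ^ (d r).val) ^ (m - (r : ℕ))) := (Finset.sum_mul_sum _ _ _ _).symm
    _ = (if k ∣ (m+1) then (k : ℂ) else 0)
        * ∏ r ∈ Finset.range m, (if k ∣ (r+1) then (k : ℂ) - 1 else -1) := by
        rw [sum_zmod hω, ← Finset.prod_univ_sum (fun _ : Fin m => (Finset.univ : Finset (ZMod k)).erase 0) (fun r z => (ω ^ z.val) ^ (m - (r : ℕ)))]
        congr 1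
        have h2 : ∀ r : Fin m, ∑ d ∈ (Finset.univ : Finset (ZMod k)).erase 0,
            (ω ^ d.val) ^ (m - (r : ℕ)) = (if k ∣ (m - (r : ℕ)) then (k : ℂ) else 0) - 1 :=
          fun r => sum_nonzero hω _
        rw [Finset.prod_congr rfl (fun r _ => h2 r),
          Fin.prod_univ_eq_prod_range (fun r => (if k ∣ (m - r) then (k : ℂ) else 0) - 1) m]
        rw [← Finset.prod_range_reflect (fun r => (if k ∣ (r + 1) then (k : ℂ) - 1 else -1)) m]
        refine Finset.prod_congr rfl (fun r hr => ?_)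
        rw [Finset.mem_range] at hr
        have : m - 1 - r + 1 = m - r := by omega
        rw [this]
        split_ifs <;> ring



lemma gauss_sign (hω : IsPrimitiveRoot ω k) : ω ^ (∑ a : Fin k, (a : ℕ)) = (-1 : ℂ) ^ (k + 1) := by
  have hk : 0 < k := Nat.pos_of_ne_zero (NeZero.ne k)
  rw [Fin.sum_univ_eq_sum_range (fun a => a) k, Finset.sum_range_id]
  rcases Nat.even_or_odd k with ⟨t, ht⟩ | ⟨t, ht⟩
  · -- k = 2t even
    have ht1 : 0 < t := by omega
    obtain ⟨s, rfl⟩ : ∃ s, t = s + 1 := ⟨t - 1, by omega⟩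
    set t := s + 1 with hts
    have h1 : k * (k - 1) / 2 = t * (2 * t - 1) := by
      have e0 : 2 * t - 1 = 2 * s + 1 := by omega
      have e1 : k - 1 = 2 * s + 1 := by omega
      rw [e0, e1, ht, hts]
      have : (s + 1 + (s + 1)) * (2 * s + 1) = ((s + 1) * (2 * s + 1)) * 2 := by ring
      rw [this, Nat.mul_div_cancel _ (by norm_num)]
    have h2 : ω ^ t = -1 := by
      have hsq : ω ^ t * ω ^ t = 1 := by
        rw [← pow_add, show t + t = k by omega, hω.pow_eq_one]
      rcases mul_self_eq_one_iff.1 hsq with h | h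
      · exact absurd h (hω.pow_ne_one_of_pos_of_lt ht1.ne' (by omega))
      · exact h
    rw [h1, pow_mul, h2]
    rw [Odd.neg_one_pow ⟨s, by omega⟩, Odd.neg_one_pow ⟨t, by omega⟩]
  · -- k = 2t + 1 odd
    have h1 : k * (k - 1) / 2 = k * t := by
      have e1 : k - 1 = 2 * t := by omega
      rw [e1]
      have : k * (2 * t) = (k * t) * 2 := by ring
      rw [this, Nat.mul_div_cancel _ (by norm_num)]
    rw [h1, pow_mul, hω.pow_eq_one, one_pow, Even.neg_one_pow ⟨t + 1, by omega⟩]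

lemma esymm_eval (hω : IsPrimitiveRoot ω k) (hkN : k ≤ N) (j : ℕ) (hj : 0 < j) :
    MvPolynomial.aeval (pt k N ω) (MvPolynomial.esymm (Fin N) ℚ j)
      = if j = k then (-1 : ℂ) ^ (k + 1) else 0 := by
  classical
  have hk : 0 < k := Nat.pos_of_ne_zero (NeZero.ne k)
  rw [MvPolynomial.esymm, map_sum]
  simp only [map_prod, MvPolynomial.aeval_X]
  have hmem : ∀ i : Fin N, i ∈ (Finset.univ : Finset (Fin k)).map (Fin.castLEEmb hkN)
      ↔ (i : ℕ) < k := by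
    intro i
    simp only [Finset.mem_map, Finset.mem_univ, true_and, Fin.castLEEmb, Function.Embedding.coeFn_mk]
    constructor
    · rintro ⟨a, rfl⟩; exact a.isLt
    · intro h; exact ⟨⟨(i : ℕ), h⟩, by simp [Fin.ext_iff, Fin.castLE]⟩
  -- restrict to subsets of the first k indices
  refine Eq.trans (Eq.symm (Finset.sum_subset
    (Finset.powersetCard_mono (Finset.subset_univ
      ((Finset.univ : Finset (Fin k)).map (Fin.castLEEmb hkN)))) ?_)) ?_
  · intro t ht ht1
    rw [Finset.mem_powersetCard] at ht ht1
    have : ¬ t ⊆ (Finset.univ : Finset (Fin k)).map (Fin.castLEEmb hkN) := by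
      intro hsub; exact ht1 ⟨hsub, ht.2⟩
    obtain ⟨i, hit, hik⟩ := Finset.not_subset.1 this
    refine Finset.prod_eq_zero hit ?_
    rw [pt, if_neg (fun h => hik ((hmem i).2 h))]
  rw [Finset.powersetCard_map, Finset.sum_map]
  have hwt : ∀ S : Finset (Fin k), (∏ i ∈ (Finset.mapEmbedding (Fin.castLEEmb hkN)).toEmbedding S,
      pt k N ω i) = ∏ a ∈ S, ω ^ (a : ℕ) := by
    intro S
    have hSE : (Finset.mapEmbedding (Fin.castLEEmb hkN)).toEmbedding S
        = Finset.map (Fin.castLEEmb hkN) S := rfl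
    rw [hSE, Finset.prod_map]
    refine Finset.prod_congr rfl (fun a _ => ?_)
    rw [pt]
    simp only [Fin.castLEEmb, Function.Embedding.coeFn_mk]
    refine (if_pos (by simpa using a.isLt)).trans ?_
    simp [Fin.castLE]
  rw [Finset.sum_congr rfl (fun S _ => hwt S)]
  by_cases hjk : j = k
  · rw [if_pos hjk, hjk]
    have hself : Finset.powersetCard k (Finset.univ : Finset (Fin k)) = {Finset.univ} := by
      have h := Finset.powersetCard_self (Finset.univ : Finset (Fin k))
      rwa [Finset.card_univ, Fintype.card_fin] at h
    rw [hself, Finset.sum_singleton, Finset.prod_pow_eq_pow_sum]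
    exact gauss_sign hω
  rw [if_neg hjk]
  by_cases hdvd : k ∣ j
  · -- j > k, empty powersetCard
    have hjgt : k < j := by
      rcases hdvd with ⟨q, rfl⟩
      have hq2 : 2 ≤ q := by
        by_contra h
        interval_cases q
        · simp at hj
        · simp at hjk
      have h2 : k * 2 ≤ k * q := Nat.mul_le_mul_left k hq2
      omega
    rw [Finset.powersetCard_eq_empty.2 (by simpa using hjgt), Finset.sum_empty]
  · -- rotation argument
    have hk2 : 2 ≤ k := by
      by_contra h
      push_neg at h
      have h1 : k = 1 := by
        have := Nat.pos_of_ne_zero (NeZero.ne k)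
        omega
      rw [h1] at hdvd
      exact hdvd (one_dvd j)
    have hval1 : ((1 : Fin k) : ℕ) = 1 := by
      rw [Fin.val_one' k]
      exact Nat.mod_eq_of_lt hk2
    have key : ω ^ j * ∑ S ∈ Finset.powersetCard j (Finset.univ : Finset (Fin k)),
            ∏ a ∈ S, ω ^ (a : ℕ)
        = ∑ S ∈ Finset.powersetCard j (Finset.univ : Finset (Fin k)), ∏ a ∈ S, ω ^ (a : ℕ) := by
      rw [Finset.mul_sum]
      refine Finset.sum_nbij'
        (fun S => S.map (Equiv.addRight (1 : Fin k)).toEmbedding)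
        (fun S => S.map (Equiv.addRight (1 : Fin k)).symm.toEmbedding) ?_ ?_ ?_ ?_ ?_
      · intro S hS
        rw [Finset.mem_powersetCard] at hS ⊢
        exact ⟨Finset.subset_univ _, by rw [Finset.card_map, hS.2]⟩
      · intro S hS
        rw [Finset.mem_powersetCard] at hS ⊢
        exact ⟨Finset.subset_univ _, by rw [Finset.card_map, hS.2]⟩
      · intro S _; ext a; simp
      · intro S _; ext a; simp
      · intro S hS
        rw [Finset.mem_powersetCard] at hS
        rw [Finset.prod_map]
        have h1 : ∀ a : Fin k, ω ^ (((Equiv.addRight (1 : Fin k)).toEmbedding a : Fin k) : ℕ)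
            = ω ^ (a : ℕ) * ω := by
          intro a
          simp only [Equiv.coe_toEmbedding, Equiv.coe_addRight]
          rw [Fin.val_add, hval1, pow_mod hω, pow_succ]
        rw [Finset.prod_congr rfl (fun a _ => h1 a), Finset.prod_mul_distrib,
          Finset.prod_const, hS.2, mul_comm]
    have hne : ω ^ j ≠ 1 := fun h => hdvd ((hω.pow_eq_one_iff_dvd j).1 h)
    by_contra hne0
    exact hne (mul_right_cancel₀ hne0 (key.trans (one_mul _).symm))



lemma prod_sign_k (hk : 0 < k) :
    (∏ r ∈ Finset.range (k - 1), (if k ∣ (r+1) then (k : ℂ) - 1 else -1)) = (-1 : ℂ) ^ (k - 1) := by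
  rw [Finset.prod_congr rfl (fun r hr => ?_), Finset.prod_const, Finset.card_range]
  rw [Finset.mem_range] at hr
  rw [if_neg]
  intro hdvd
  have := Nat.le_of_dvd (by omega) hdvd
  omega

lemma prod_sign_2k (hk : 0 < k) :
    (∏ r ∈ Finset.range (2 * k - 1), (if k ∣ (r+1) then (k : ℂ) - 1 else -1))
      = (k : ℂ) - 1 := by
  have hkm : k - 1 ∈ Finset.range (2 * k - 1) := Finset.mem_range.2 (by omega)
  rw [← Finset.mul_prod_erase _ _ hkm]
  have h1 : (if k ∣ (k - 1 + 1) then (k : ℂ) - 1 else -1) = (k : ℂ) - 1 := by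
    rw [if_pos]
    rw [Nat.sub_add_cancel hk]
  have h2 : ∀ r ∈ (Finset.range (2 * k - 1)).erase (k - 1),
      (if k ∣ (r+1) then (k : ℂ) - 1 else -1) = -1 := by
    intro r hr
    rw [Finset.mem_erase, Finset.mem_range] at hr
    rw [if_neg]
    intro hdvd
    obtain ⟨q, hq⟩ := hdvd
    have hq2 : 2 ≤ q → k * 2 ≤ k * q := fun h => Nat.mul_le_mul_left k h
    rcases Nat.lt_or_ge q 2 with h | h
    · interval_cases q <;> omega
    · have := hq2 h; omega
  rw [Finset.prod_congr rfl h2, Finset.prod_const, h1, Finset.card_erase_of_mem hkm,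
    Finset.card_range]
  rw [show 2 * k - 1 - 1 = 2 * (k - 1) by omega, pow_mul, neg_one_sq, one_pow, mul_one]


end ChromAux


/-- the special partition (k, k) of 2k -/
def kkPartition (k : ℕ) (hk : 0 < k) : (2 * k).Partition where
  parts := {k, k}
  parts_pos := by
    intro i hi
    rcases Multiset.mem_cons.1 hi with h | h
    · rw [h]; exact hk
    · rw [Multiset.mem_singleton.1 h]; exact hk
  parts_sum := by
    rw [Multiset.insert_eq_cons, Multiset.sum_cons, Multiset.sum_singleton]
    omega


/-- For every `k ≥ 1` and every `N ≥ 2k`, there do **not** exist nonnegative rational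
numbers `c_λ`, indexed by the partitions `λ ⊢ 2k`, with
`X_{P_{2k}} − k·e_k·X_{P_k} = ∑_{λ ⊢ 2k} c_λ e_{λ₁} e_{λ₂} ⋯`. -/
theorem chromPoly_pathGraph_sub_k_esymm_not_ePositive (k N : ℕ) (hk : 1 ≤ k) (hN : 2 * k ≤ N) :
    ¬ ∃ c : (2 * k).Partition → ℚ, (∀ P, 0 ≤ c P) ∧
        chromPolyQ N (SimpleGraph.pathGraph (2 * k))
            - (k : ℚ) • (MvPolynomial.esymm (Fin N) ℚ k *
                chromPolyQ N (SimpleGraph.pathGraph k))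
          = ∑ P : (2 * k).Partition, c P • (P.parts.map (MvPolynomial.esymm (Fin N) ℚ)).prod := by
  classical
  haveI : NeZero k := ⟨by omega⟩
  have hk0 : 0 < k := hk
  have hkN : k ≤ N := by omega
  set ω : ℂ := Complex.exp (2 * Real.pi * Complex.I / k) with hωdef
  have hω : IsPrimitiveRoot ω k := Complex.isPrimitiveRoot_exp k (by omega)
  rintro ⟨c, hc, heq⟩
  have H := congrArg (MvPolynomial.aeval (ChromAux.pt k N ω)) heq
  simp only [map_sub, map_smul, map_mul, map_sum] at H
  -- evaluate the chromatic polynomial of P_{2k}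
  have e2 := ChromAux.chrom_eval (k := k) (N := N) hω hkN (2 * k - 1)
  rw [show 2 * k - 1 + 1 = 2 * k from by omega] at e2
  rw [ChromAux.prod_sign_2k hk0, if_pos (dvd_mul_left k 2)] at e2
  -- evaluate the chromatic polynomial of P_k
  have e1 := ChromAux.chrom_eval (k := k) (N := N) hω hkN (k - 1)
  rw [show k - 1 + 1 = k from by omega] at e1
  rw [ChromAux.prod_sign_k hk0, if_pos (dvd_refl k)] at e1
  -- evaluate e_k
  have e3 := ChromAux.esymm_eval (k := k) (N := N) hω hkN k hk0
  rw [if_pos rfl] at e3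
  rw [e1, e2, e3] at H
  -- evaluate the right-hand side
  have hpart : ∀ P : (2 * k).Partition,
      MvPolynomial.aeval (ChromAux.pt k N ω) ((P.parts.map (MvPolynomial.esymm (Fin N) ℚ)).prod)
        = if P = kkPartition k hk0 then 1 else 0 := by
    intro P
    rw [map_multiset_prod, Multiset.map_map]
    by_cases hP : P = kkPartition k hk0
    · rw [if_pos hP, hP]
      show ((Multiset.map _ ({k, k} : Multiset ℕ)).prod : ℂ) = 1
      rw [Multiset.insert_eq_cons, Multiset.map_cons, Multiset.map_singleton,
        Multiset.prod_cons, Multiset.prod_singleton]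
      simp only [Function.comp_apply]
      rw [ChromAux.esymm_eval hω hkN k hk0, if_pos rfl, ← pow_add]
      exact Even.neg_one_pow ⟨k + 1, by ring⟩
    · rw [if_neg hP]
      have hnall : ¬ ∀ j ∈ P.parts, j = k := by
        intro hall
        apply hP
        have hrep : P.parts = Multiset.replicate (Multiset.card P.parts) k :=
          Multiset.eq_replicate_card.2 hall
        have hsum := P.parts_sum
        rw [hrep, Multiset.sum_replicate, smul_eq_mul] at hsum
        have hcard : Multiset.card P.parts = 2 := Nat.eq_of_mul_eq_mul_right hk0 hsum
        ext1
        rw [hrep, hcard]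
        show Multiset.replicate 2 k = ({k, k} : Multiset ℕ)
        rw [Multiset.insert_eq_cons]
        simp [Multiset.replicate_succ]
      push_neg at hnall
      obtain ⟨j, hjmem, hjk⟩ := hnall
      apply Multiset.prod_eq_zero
      refine Multiset.mem_map.2 ⟨j, hjmem, ?_⟩
      simp only [Function.comp_apply]
      rw [ChromAux.esymm_eval hω hkN j (P.parts_pos hjmem), if_neg hjk]
  rw [Finset.sum_congr rfl (fun P _ => by rw [hpart P])] at H
  simp only [smul_ite, smul_zero] at H
  rw [Finset.sum_ite_eq' Finset.univ (kkPartition k hk0)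
    (fun P => c P • (1 : ℂ)), if_pos (Finset.mem_univ _)] at H
  -- now derive the numeric contradiction
  have hsmul : ∀ (q : ℚ) (z : ℂ), q • z = (q : ℂ) * z := fun q z => Rat.smul_def q z
  rw [hsmul, hsmul, mul_one] at H
  have hsign : ((-1 : ℂ) ^ (k + 1) * ((k : ℂ) * (-1) ^ (k - 1))) = (k : ℂ) := by
    rw [mul_comm ((k : ℂ)) _, ← mul_assoc, ← pow_add,
      show k + 1 + (k - 1) = 2 * k from by omega, pow_mul, neg_one_sq, one_pow, one_mul]
  rw [hsign] at H
  have Hq : (c (kkPartition k hk0) : ℂ) = -(k : ℂ) := by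
    rw [← H]
    push_cast
    ring
  have Hq' : c (kkPartition k hk0) = -(k : ℚ) := by exact_mod_cast Hq
  have h0 := hc (kkPartition k hk0)
  rw [Hq'] at h0
  have : (1 : ℚ) ≤ (k : ℚ) := by exact_mod_cast hk
  linarith


end
end

section
/- Let n ≥ 6 and let κ be a content with Σ_i κ_i = n. Then there exists an injection ι from 𝒴_{(3,2)}(κ) into 𝒴_{(2,3)}(κ) such that r(ι(y)) = r(y) for every y, and whose image is exactly 𝒴_{(2,3)}(κ) \ 𝒴(κ; (1,2,1,2,3,3)). -/
open scoped Classical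

noncomputable section

/-- The list of lengths of the maximal strictly increasing runs of a word, in order
(the run type `τ_y`); its length is the number of runs `r(y)`. -/
def runLengths : List ℕ → List ℕ
  | [] => []
  | [_] => [1]
  | a :: b :: l =>
    if a < b then
      match runLengths (b :: l) with
      | [] => [1]
      | c :: cs => (c + 1) :: cs
    else 1 :: runLengths (b :: l)

/-- `y` belongs to `𝒴(κ)`: the word `y` has content `κ` (the letter `i` occurs `κ i` times;
in particular all letters are positive when `κ 0 = 0`), is Yamanouchi (in every prefix, `i+1`
occurs at most as often as `i`, for every `i ≥ 1`), and every run of `y` except possibly the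
last has length at least `2`. -/
def MemYam (κ : ℕ → ℕ) (y : List ℕ) : Prop :=
  (∀ i, y.count i = κ i) ∧
  (∀ m i, 1 ≤ i → ((y.take m).count (i + 1) : ℕ) ≤ (y.take m).count i) ∧
  (∀ l ∈ (runLengths y).dropLast, 2 ≤ l)

/-- The set `𝒴_α(κ)` of words in `𝒴(κ)` whose run type has `α` as a prefix. -/
def yamRT (κ : ℕ → ℕ) (α : List ℕ) : Set (List ℕ) :=
  {y | MemYam κ y ∧ α <+: runLengths y}

/-- The set `𝒴(κ; β)` of words in `𝒴(κ)` having the word `β` as a prefix. -/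
def yamPre (κ : ℕ → ℕ) (β : List ℕ) : Set (List ℕ) :=
  {y | MemYam κ y ∧ β <+: y}

/-! ### Auxiliary lemmas -/

lemma rl_head_pos : ∀ (l : List ℕ) (a : ℕ), ∃ c cs, runLengths (a :: l) = c :: cs ∧ 1 ≤ c := by
  intro l
  induction l with
  | nil => exact fun a => ⟨1, [], rfl, le_refl 1⟩
  | cons b l ih =>
    intro a
    obtain ⟨c, cs, hc, hc1⟩ := ih b
    by_cases h : a < b
    · exact ⟨c + 1, cs, by rw [runLengths, if_pos h, hc], by omega⟩
    · exact ⟨1, runLengths (b :: l), by rw [runLengths, if_neg h], le_refl 1⟩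

lemma rl_lt {a b : ℕ} (l : List ℕ) (h : a < b) {c : ℕ} {cs : List ℕ}
    (hc : runLengths (b :: l) = c :: cs) : runLengths (a :: b :: l) = (c + 1) :: cs := by
  rw [runLengths, if_pos h, hc]

lemma rl_not_lt {a b : ℕ} (l : List ℕ) (h : ¬ a < b) :
    runLengths (a :: b :: l) = 1 :: runLengths (b :: l) := by
  rw [runLengths, if_neg h]

lemma rl_comp32 {x1 x2 x3 x4 x5 x6 : ℕ} (rest : List ℕ) (h12 : x1 < x2) (h23 : x2 < x3)
    (h34 : ¬ x3 < x4) (h45 : x4 < x5) (h56 : ¬ x5 < x6) :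
    runLengths (x1::x2::x3::x4::x5::x6::rest) = 3 :: 2 :: runLengths (x6::rest) := by
  obtain ⟨c, cs, hc, -⟩ := rl_head_pos rest x6
  have e5 := rl_not_lt rest h56
  rw [hc] at e5
  have e4 := rl_lt _ h45 e5
  have e3 := rl_not_lt (x5::x6::rest) h34
  rw [e4] at e3
  have e2 := rl_lt _ h23 e3
  have e1 := rl_lt _ h12 e2
  rw [e1, hc]

lemma rl_comp23 {x1 x2 x3 x4 x5 x6 : ℕ} (rest : List ℕ) (h12 : x1 < x2) (h23 : ¬ x2 < x3)
    (h34 : x3 < x4) (h45 : x4 < x5) (h56 : ¬ x5 < x6) :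
    runLengths (x1::x2::x3::x4::x5::x6::rest) = 2 :: 3 :: runLengths (x6::rest) := by
  obtain ⟨c, cs, hc, -⟩ := rl_head_pos rest x6
  have e5 := rl_not_lt rest h56
  rw [hc] at e5
  have e4 := rl_lt _ h45 e5
  have e3 := rl_lt _ h34 e4
  have e2 := rl_not_lt (x4::x5::x6::rest) h23
  rw [e3] at e2
  have e1 := rl_lt _ h12 e2
  rw [e1, hc]

lemma rl_shape32 {x1 x2 x3 x4 x5 x6 : ℕ} {rest s : List ℕ}
    (hs : runLengths (x1::x2::x3::x4::x5::x6::rest) = 3 :: 2 :: s) :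
    x1 < x2 ∧ x2 < x3 ∧ ¬ x3 < x4 ∧ x4 < x5 ∧ ¬ x5 < x6 := by
  have h12 : x1 < x2 := by
    by_contra h
    rw [rl_not_lt (x3::x4::x5::x6::rest) h] at hs
    simp at hs
  have h23 : x2 < x3 := by
    by_contra h
    have e := rl_lt _ h12 (rl_not_lt (x4::x5::x6::rest) h)
    rw [e] at hs
    simp at hs
  have h34 : ¬ x3 < x4 := by
    intro h
    obtain ⟨c, cs, hc, hc1⟩ := rl_head_pos (x5::x6::rest) x4
    have e := rl_lt _ h12 (rl_lt _ h23 (rl_lt _ h hc))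
    rw [e] at hs
    obtain ⟨h1, -⟩ := List.cons_eq_cons.mp hs
    omega
  have key : runLengths (x4::x5::x6::rest) = 2 :: s := by
    have e := rl_lt _ h12 (rl_lt _ h23 (rl_not_lt (x5::x6::rest) h34))
    rw [e] at hs
    exact (List.cons_eq_cons.mp hs).2
  have h45 : x4 < x5 := by
    by_contra h
    rw [rl_not_lt (x6::rest) h] at key
    simp at key
  have h56 : ¬ x5 < x6 := by
    intro h
    obtain ⟨c, cs, hc, hc1⟩ := rl_head_pos rest x6
    have e := rl_lt _ h45 (rl_lt _ h hc)
    rw [e] at key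
    obtain ⟨h1, -⟩ := List.cons_eq_cons.mp key
    omega
  exact ⟨h12, h23, h34, h45, h56⟩

lemma rl_shape23 {x1 x2 x3 x4 x5 x6 : ℕ} {rest s : List ℕ}
    (hs : runLengths (x1::x2::x3::x4::x5::x6::rest) = 2 :: 3 :: s) :
    x1 < x2 ∧ ¬ x2 < x3 ∧ x3 < x4 ∧ x4 < x5 ∧ ¬ x5 < x6 := by
  have h12 : x1 < x2 := by
    by_contra h
    rw [rl_not_lt (x3::x4::x5::x6::rest) h] at hs
    simp at hs
  have h23 : ¬ x2 < x3 := by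
    intro h
    obtain ⟨c, cs, hc, hc1⟩ := rl_head_pos (x4::x5::x6::rest) x3
    have e := rl_lt _ h12 (rl_lt _ h hc)
    rw [e] at hs
    obtain ⟨h1, -⟩ := List.cons_eq_cons.mp hs
    omega
  have key : runLengths (x3::x4::x5::x6::rest) = 3 :: s := by
    have e := rl_lt _ h12 (rl_not_lt (x4::x5::x6::rest) h23)
    rw [e] at hs
    exact (List.cons_eq_cons.mp hs).2
  have h34 : x3 < x4 := by
    by_contra h
    rw [rl_not_lt (x5::x6::rest) h] at key
    simp at key
  have h45 : x4 < x5 := by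
    by_contra h
    have e := rl_lt _ h34 (rl_not_lt (x6::rest) h)
    rw [e] at key
    simp at key
  have h56 : ¬ x5 < x6 := by
    intro h
    obtain ⟨c, cs, hc, hc1⟩ := rl_head_pos rest x6
    have e := rl_lt _ h34 (rl_lt _ h45 (rl_lt _ h hc))
    rw [e] at key
    obtain ⟨h1, -⟩ := List.cons_eq_cons.mp key
    omega
  exact ⟨h12, h23, h34, h45, h56⟩

lemma my_length_eq (y : List ℕ) (κ : ℕ →₀ ℕ) (h : ∀ i, y.count i = κ i) :
    y.length = κ.sum (fun _ m => m) := by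
  classical
  have h1 : (y : Multiset ℕ).toFinset = κ.support := by
    ext a
    simp only [Multiset.mem_toFinset, Finsupp.mem_support_iff, ← h a]
    constructor
    · intro hm hc
      exact absurd ((List.count_pos_iff).2 hm) (by omega)
    · intro hc
      exact (List.count_pos_iff).1 (Nat.pos_of_ne_zero hc)
  have h2 := Multiset.toFinset_sum_count_eq (y : Multiset ℕ)
  rw [Finsupp.sum, ← h1, show y.length = Multiset.card (y : Multiset ℕ) from rfl, ← h2]
  exact Finset.sum_congr rfl (fun a _ => by rw [Multiset.coe_count, h])

lemma yam_explicit (q : List ℕ) (hlen : q.length = 5) (hmax : ∀ x ∈ q, x ≤ 4)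
    (h : ∀ m, m ≤ 5 → ∀ i, i ≤ 4 → 1 ≤ i → ((q.take m).count (i+1) ≤ (q.take m).count i)) :
    ∀ m i, 1 ≤ i → ((q.take m).count (i+1) ≤ (q.take m).count i) := by
  intro m i hi
  by_cases h4 : i ≤ 4
  · by_cases hm : m ≤ 5
    · exact h m hm i h4 hi
    · have e : q.take m = q := List.take_of_length_le (by omega)
      have e5 : q.take 5 = q := List.take_of_length_le (by omega)
      have := h 5 (le_refl 5) i h4 hi
      rw [e5] at this
      rw [e]
      exact this
  · rw [List.count_eq_zero_of_not_mem
      (fun hm => absurd (hmax _ (List.take_subset _ _ hm)) (by omega))]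
    exact Nat.zero_le _

lemma yam_transfer (p q t : List ℕ) (hlen : p.length = q.length)
    (hcnt : ∀ i, p.count i = q.count i)
    (hp : ∀ m i, 1 ≤ i → (((p ++ t).take m).count (i+1) ≤ ((p ++ t).take m).count i))
    (hq : ∀ m i, 1 ≤ i → ((q.take m).count (i+1) ≤ (q.take m).count i)) :
    ∀ m i, 1 ≤ i → (((q ++ t).take m).count (i+1) ≤ ((q ++ t).take m).count i) := by
  intro m i hi
  rw [List.take_append, List.count_append, List.count_append]
  by_cases hm : m ≤ q.length
  · have h0 : m - q.length = 0 := by omega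
    rw [h0]
    simp only [List.take_zero, List.count_nil, Nat.add_zero]
    exact hq m i hi
  · have hq' : q.take m = q := List.take_of_length_le (by omega)
    have hp' : p.take m = p := List.take_of_length_le (by omega)
    have := hp m i hi
    rw [List.take_append, List.count_append, List.count_append, hp', hlen] at this
    rw [hq', ← hcnt i, ← hcnt (i+1)]
    exact this

lemma memYam_transfer (κ : ℕ → ℕ) (p q t : List ℕ) (hlen : p.length = q.length)
    (hperm : p.Perm q)
    (hq : ∀ m i, 1 ≤ i → ((q.take m).count (i+1) ≤ (q.take m).count i))
    (h1 : ∀ i, (p ++ t).count i = κ i)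
    (h2 : ∀ m i, 1 ≤ i → (((p ++ t).take m).count (i + 1)) ≤ ((p ++ t).take m).count i) :
    (∀ i, (q ++ t).count i = κ i) ∧
    (∀ m i, 1 ≤ i → (((q ++ t).take m).count (i + 1)) ≤ ((q ++ t).take m).count i) := by
  constructor
  · intro i
    rw [← (hperm.append_right t).count_eq]
    exact h1 i
  · exact yam_transfer p q t hlen (fun i => hperm.count_eq i) h2 hq

/-- The injection: `1,2,3,1,2,⋯ ↦ 1,2,1,2,3,⋯` and `1,2,3,1,4,⋯ ↦ 1,2,1,3,4,⋯`. -/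
def iota : List ℕ → List ℕ
  | _::_::_::_::e::t => if e = 2 then 1::2::1::2::3::t else 1::2::1::3::4::t
  | y => y

lemma iota2 (t : List ℕ) : iota (1::2::3::1::2::t) = 1::2::1::2::3::t := by simp [iota]

lemma iota4 (t : List ℕ) : iota (1::2::3::1::4::t) = 1::2::1::3::4::t := by simp [iota]

lemma shape32 {κ : ℕ → ℕ} {y : List ℕ} (hy : MemYam κ y) (hpre : [3, 2] <+: runLengths y)
    (hκ0 : κ 0 = 0) (hlen : 6 ≤ y.length) :
    ∃ d r rest, y = 1::2::3::1::d::r::rest ∧ (d = 2 ∨ d = 4) ∧ r ≤ d := by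
  obtain ⟨hcnt, hyam, hrun⟩ := hy
  obtain ⟨x1, x2, x3, x4, x5, x6, rest, rfl⟩ :
      ∃ x1 x2 x3 x4 x5 x6 rest, y = x1::x2::x3::x4::x5::x6::rest := by
    rcases y with _|⟨x1,_|⟨x2,_|⟨x3,_|⟨x4,_|⟨x5,_|⟨x6,rest⟩⟩⟩⟩⟩⟩ <;>
      first
        | exact ⟨_, _, _, _, _, _, _, rfl⟩
        | (exfalso; simp at hlen)
  have hpos : ∀ x ∈ x1::x2::x3::x4::x5::x6::rest, 1 ≤ x := by
    intro x hx
    rcases Nat.eq_zero_or_pos x with h0 | h1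
    · subst h0
      have := hcnt 0
      rw [hκ0, List.count_eq_zero] at this
      exact absurd hx this
    · exact h1
  obtain ⟨s, hs⟩ := hpre
  obtain ⟨h12, h23, h34, h45, h56⟩ := rl_shape32 hs.symm
  -- x1 = 1
  have hx1 : x1 = 1 := by
    by_contra h
    have hp := hpos x1 (by simp)
    have hy1 := hyam 1 (x1 - 1) (by omega)
    rw [show x1 - 1 + 1 = x1 by omega] at hy1
    simp only [List.take_succ_cons, List.take_zero, List.count_cons, List.count_nil,
      beq_iff_eq] at hy1
    split_ifs at hy1 <;> omega
  subst hx1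
  -- x2 = 2
  have hx2 : x2 = 2 := by
    by_contra h
    have h3 : 3 ≤ x2 := by omega
    have hy1 := hyam 2 (x2 - 1) (by omega)
    rw [show x2 - 1 + 1 = x2 by omega] at hy1
    simp only [List.take_succ_cons, List.take_zero, List.count_cons, List.count_nil,
      beq_iff_eq] at hy1
    split_ifs at hy1 <;> omega
  subst hx2
  -- x3 = 3
  have hx3 : x3 = 3 := by
    by_contra h
    have h4 : 4 ≤ x3 := by omega
    have hy1 := hyam 3 (x3 - 1) (by omega)
    rw [show x3 - 1 + 1 = x3 by omega] at hy1
    simp only [List.take_succ_cons, List.take_zero, List.count_cons, List.count_nil,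
      beq_iff_eq] at hy1
    split_ifs at hy1 <;> omega
  subst hx3
  -- x4 = 1
  have hx4 : x4 = 1 := by
    have hb : x4 ≤ 3 := by omega
    have ha : 1 ≤ x4 := hpos x4 (by simp)
    interval_cases x4
    · rfl
    · have hy1 := hyam 4 1 (le_refl 1)
      simp only [List.take_succ_cons, List.take_zero, List.count_cons, List.count_nil,
        beq_iff_eq] at hy1
      split_ifs at hy1 <;> omega
    · have hy1 := hyam 4 2 (by omega)
      simp only [List.take_succ_cons, List.take_zero, List.count_cons, List.count_nil,
        beq_iff_eq] at hy1
      split_ifs at hy1 <;> omega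
  subst hx4
  -- x5 ∈ {2, 4}
  have hx5 : x5 = 2 ∨ x5 = 4 := by
    have h2 : 2 ≤ x5 := by omega
    rcases show x5 = 2 ∨ x5 = 3 ∨ x5 = 4 ∨ 5 ≤ x5 by omega with h | h | h | h
    · exact Or.inl h
    · exfalso
      subst h
      have hy1 := hyam 5 2 (by omega)
      simp only [List.take_succ_cons, List.take_zero, List.count_cons, List.count_nil,
        beq_iff_eq] at hy1
      split_ifs at hy1 <;> omega
    · exact Or.inr h
    · exfalso
      have hy1 := hyam 5 (x5 - 1) (by omega)
      rw [show x5 - 1 + 1 = x5 by omega] at hy1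
      simp only [List.take_succ_cons, List.take_zero, List.count_cons, List.count_nil,
        beq_iff_eq] at hy1
      split_ifs at hy1 <;> omega
  exact ⟨x5, x6, rest, rfl, hx5, by omega⟩

lemma shape23 {κ : ℕ → ℕ} {y : List ℕ} (hy : MemYam κ y) (hpre : [2, 3] <+: runLengths y)
    (hκ0 : κ 0 = 0) (hlen : 6 ≤ y.length) :
    ∃ d e r rest, y = 1::2::1::d::e::r::rest ∧ ((d = 2 ∧ e = 3) ∨ (d = 3 ∧ e = 4)) ∧ r ≤ e := by
  obtain ⟨hcnt, hyam, hrun⟩ := hy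
  obtain ⟨x1, x2, x3, x4, x5, x6, rest, rfl⟩ :
      ∃ x1 x2 x3 x4 x5 x6 rest, y = x1::x2::x3::x4::x5::x6::rest := by
    rcases y with _|⟨x1,_|⟨x2,_|⟨x3,_|⟨x4,_|⟨x5,_|⟨x6,rest⟩⟩⟩⟩⟩⟩ <;>
      first
        | exact ⟨_, _, _, _, _, _, _, rfl⟩
        | (exfalso; simp at hlen)
  have hpos : ∀ x ∈ x1::x2::x3::x4::x5::x6::rest, 1 ≤ x := by
    intro x hx
    rcases Nat.eq_zero_or_pos x with h0 | h1
    · subst h0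
      have := hcnt 0
      rw [hκ0, List.count_eq_zero] at this
      exact absurd hx this
    · exact h1
  obtain ⟨s, hs⟩ := hpre
  obtain ⟨h12, h23, h34, h45, h56⟩ := rl_shape23 hs.symm
  have hx1 : x1 = 1 := by
    by_contra h
    have hp := hpos x1 (by simp)
    have hy1 := hyam 1 (x1 - 1) (by omega)
    rw [show x1 - 1 + 1 = x1 by omega] at hy1
    simp only [List.take_succ_cons, List.take_zero, List.count_cons, List.count_nil,
      beq_iff_eq] at hy1
    split_ifs at hy1 <;> omega
  subst hx1
  have hx2 : x2 = 2 := by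
    by_contra h
    have h3 : 3 ≤ x2 := by omega
    have hy1 := hyam 2 (x2 - 1) (by omega)
    rw [show x2 - 1 + 1 = x2 by omega] at hy1
    simp only [List.take_succ_cons, List.take_zero, List.count_cons, List.count_nil,
      beq_iff_eq] at hy1
    split_ifs at hy1 <;> omega
  subst hx2
  have hx3 : x3 = 1 := by
    have ha : 1 ≤ x3 := hpos x3 (by simp)
    have hb : x3 ≤ 2 := by omega
    interval_cases x3
    · rfl
    · exfalso
      have hy1 := hyam 3 1 (le_refl 1)
      simp only [List.take_succ_cons, List.take_zero, List.count_cons, List.count_nil,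
        beq_iff_eq] at hy1
      split_ifs at hy1 <;> omega
  subst hx3
  have hx4 : x4 = 2 ∨ x4 = 3 := by
    have h2 : 2 ≤ x4 := by omega
    rcases show x4 = 2 ∨ x4 = 3 ∨ 4 ≤ x4 by omega with h | h | h
    · exact Or.inl h
    · exact Or.inr h
    · exfalso
      have hy1 := hyam 4 (x4 - 1) (by omega)
      rw [show x4 - 1 + 1 = x4 by omega] at hy1
      simp only [List.take_succ_cons, List.take_zero, List.count_cons, List.count_nil,
        beq_iff_eq] at hy1
      split_ifs at hy1 <;> omega
  rcases hx4 with hx4 | hx4 <;> subst hx4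
  · -- x4 = 2, so x5 = 3
    have hx5 : x5 = 3 := by
      have h3 : 3 ≤ x5 := by omega
      by_contra h
      have h4 : 4 ≤ x5 := by omega
      have hy1 := hyam 5 (x5 - 1) (by omega)
      rw [show x5 - 1 + 1 = x5 by omega] at hy1
      simp only [List.take_succ_cons, List.take_zero, List.count_cons, List.count_nil,
        beq_iff_eq] at hy1
      split_ifs at hy1 <;> omega
    subst hx5
    exact ⟨2, 3, x6, rest, rfl, Or.inl ⟨rfl, rfl⟩, by omega⟩
  · -- x4 = 3, so x5 = 4
    have hx5 : x5 = 4 := by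
      have h3 : 4 ≤ x5 := by omega
      by_contra h
      have h4 : 5 ≤ x5 := by omega
      have hy1 := hyam 5 (x5 - 1) (by omega)
      rw [show x5 - 1 + 1 = x5 by omega] at hy1
      simp only [List.take_succ_cons, List.take_zero, List.count_cons, List.count_nil,
        beq_iff_eq] at hy1
      split_ifs at hy1 <;> omega
    subst hx5
    exact ⟨3, 4, x6, rest, rfl, Or.inr ⟨rfl, rfl⟩, by omega⟩

lemma drop_swap {a b a' b' : ℕ} {L : List ℕ} (ha : 2 ≤ a') (hb : 2 ≤ b') (hL : L ≠ [])
    (h : ∀ l ∈ (a::b::L).dropLast, 2 ≤ l) : ∀ l ∈ (a'::b'::L).dropLast, 2 ≤ l := by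
  obtain ⟨c, cs, rfl⟩ : ∃ c cs, L = c::cs := by
    rcases L with _ | ⟨c, cs⟩
    · exact absurd rfl hL
    · exact ⟨c, cs, rfl⟩
  intro l hl
  rw [show (a'::b'::c::cs).dropLast = a'::b'::(c::cs).dropLast from rfl,
    List.mem_cons, List.mem_cons] at hl
  rcases hl with rfl | rfl | hl
  · exact ha
  · exact hb
  · refine h l ?_
    rw [show (a::b::c::cs).dropLast = a::b::(c::cs).dropLast from rfl]
    simp [hl]

/-- For `n ≥ 6` and any content `κ` with `Σᵢ κᵢ = n`, there is an injection
`ι : 𝒴_{(3,2)}(κ) → 𝒴_{(2,3)}(κ)` preserving the number of runs, whose image is exactly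
`𝒴_{(2,3)}(κ) \ 𝒴(κ; (1,2,1,2,3,3))`. -/
theorem exists_injection_yam_32_23 (n : ℕ) (κ : ℕ →₀ ℕ) (hn : 6 ≤ n)
    (hκ0 : κ 0 = 0) (hκ : κ.sum (fun _ m => m) = n) :
    ∃ ι : List ℕ → List ℕ,
      Set.InjOn ι (yamRT κ [3, 2]) ∧
      (∀ y ∈ yamRT κ [3, 2], (runLengths (ι y)).length = (runLengths y).length) ∧
      ι '' yamRT κ [3, 2] = yamRT κ [2, 3] \ yamPre κ [1, 2, 1, 2, 3, 3] := by
  classical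
  have q23a := yam_explicit [1,2,1,2,3] rfl (by decide) (by decide)
  have q23b := yam_explicit [1,2,1,3,4] rfl (by decide) (by decide)
  have q32a := yam_explicit [1,2,3,1,2] rfl (by decide) (by decide)
  have q32b := yam_explicit [1,2,3,1,4] rfl (by decide) (by decide)
  have hlen6 : ∀ y : List ℕ, MemYam κ y → 6 ≤ y.length := by
    intro y hy
    rw [my_length_eq y κ hy.1, hκ]
    exact hn
  refine ⟨iota, ?_, ?_, ?_⟩
  · -- injectivity
    intro y1 hy1 y2 hy2 heq
    obtain ⟨d1, r1, t1, rfl, hd1, hr1⟩ := shape32 hy1.1 hy1.2 hκ0 (hlen6 _ hy1.1)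
    obtain ⟨d2, r2, t2, rfl, hd2, hr2⟩ := shape32 hy2.1 hy2.2 hκ0 (hlen6 _ hy2.1)
    rcases hd1 with rfl | rfl <;> rcases hd2 with rfl | rfl <;>
      simp only [iota2, iota4, List.cons.injEq] at heq <;> simp_all
  · -- run count preservation
    intro y hy
    obtain ⟨d, r, rest, rfl, hd, hr⟩ := shape32 hy.1 hy.2 hκ0 (hlen6 _ hy.1)
    rcases hd with rfl | rfl
    · rw [iota2, rl_comp23 rest (by norm_num) (by omega) (by norm_num) (by norm_num) (by omega),
        rl_comp32 rest (by norm_num) (by norm_num) (by omega) (by norm_num) (by omega)]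
      simp
    · rw [iota4, rl_comp23 rest (by norm_num) (by omega) (by norm_num) (by norm_num) (by omega),
        rl_comp32 rest (by norm_num) (by norm_num) (by omega) (by norm_num) (by omega)]
      simp
  · -- image identification
    ext z
    simp only [Set.mem_image, Set.mem_diff]
    constructor
    · rintro ⟨y, hy, rfl⟩
      obtain ⟨d, r, rest, rfl, hd, hr⟩ := shape32 hy.1 hy.2 hκ0 (hlen6 _ hy.1)
      obtain ⟨c, cs, hc, -⟩ := rl_head_pos rest r
      rcases hd with rfl | rfl
      · rw [iota2]
        have e32 : runLengths (1::2::3::1::2::r::rest) = 3::2::runLengths (r::rest) :=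
          rl_comp32 rest (by norm_num) (by norm_num) (by omega) (by norm_num) (by omega)
        have e23 : runLengths (1::2::1::2::3::r::rest) = 2::3::runLengths (r::rest) :=
          rl_comp23 rest (by norm_num) (by omega) (by norm_num) (by norm_num) (by omega)
        have hmem := memYam_transfer κ [1,2,3,1,2] [1,2,1,2,3] (r::rest) rfl (by decide)
          q23a hy.1.1 hy.1.2.1
        have hrun := hy.1.2.2
        rw [e32] at hrun
        refine ⟨⟨⟨hmem.1, hmem.2, ?_⟩, ?_⟩, ?_⟩
        · rw [e23]
          exact drop_swap (by norm_num) (by norm_num) (by rw [hc]; simp) hrun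
        · rw [e23, hc]
          exact ⟨c :: cs, rfl⟩
        · rintro ⟨-, t, ht⟩
          simp only [List.cons_append, List.nil_append, List.cons.injEq] at ht
          omega
      · rw [iota4]
        have e32 : runLengths (1::2::3::1::4::r::rest) = 3::2::runLengths (r::rest) :=
          rl_comp32 rest (by norm_num) (by norm_num) (by omega) (by norm_num) (by omega)
        have e23 : runLengths (1::2::1::3::4::r::rest) = 2::3::runLengths (r::rest) :=
          rl_comp23 rest (by norm_num) (by omega) (by norm_num) (by norm_num) (by omega)
        have hmem := memYam_transfer κ [1,2,3,1,4] [1,2,1,3,4] (r::rest) rfl (by decide)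
          q23b hy.1.1 hy.1.2.1
        have hrun := hy.1.2.2
        rw [e32] at hrun
        refine ⟨⟨⟨hmem.1, hmem.2, ?_⟩, ?_⟩, ?_⟩
        · rw [e23]
          exact drop_swap (by norm_num) (by norm_num) (by rw [hc]; simp) hrun
        · rw [e23, hc]
          exact ⟨c :: cs, rfl⟩
        · rintro ⟨-, t, ht⟩
          simp only [List.cons_append, List.nil_append, List.cons.injEq] at ht
          omega
    · rintro ⟨⟨hz, hzpre⟩, hznot⟩
      obtain ⟨d, e, r, rest, rfl, hde, hr⟩ := shape23 hz hzpre hκ0 (hlen6 _ hz)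
      obtain ⟨c, cs, hc, -⟩ := rl_head_pos rest r
      rcases hde with ⟨rfl, rfl⟩ | ⟨rfl, rfl⟩
      · have hr2 : r ≤ 2 := by
          by_contra h
          have h3 : r = 3 := by omega
          subst h3
          exact hznot ⟨hz, rest, rfl⟩
        have e32 : runLengths (1::2::3::1::2::r::rest) = 3::2::runLengths (r::rest) :=
          rl_comp32 rest (by norm_num) (by norm_num) (by omega) (by norm_num) (by omega)
        have e23 : runLengths (1::2::1::2::3::r::rest) = 2::3::runLengths (r::rest) :=
          rl_comp23 rest (by norm_num) (by omega) (by norm_num) (by norm_num) (by omega)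
        have hmem := memYam_transfer κ [1,2,1,2,3] [1,2,3,1,2] (r::rest) rfl (by decide)
          q32a hz.1 hz.2.1
        have hrun := hz.2.2
        rw [e23] at hrun
        refine ⟨1::2::3::1::2::r::rest, ⟨⟨hmem.1, hmem.2, ?_⟩, ?_⟩, iota2 (r::rest)⟩
        · rw [e32]
          exact drop_swap (by norm_num) (by norm_num) (by rw [hc]; simp) hrun
        · rw [e32, hc]
          exact ⟨c :: cs, rfl⟩
      · have e32 : runLengths (1::2::3::1::4::r::rest) = 3::2::runLengths (r::rest) :=
          rl_comp32 rest (by norm_num) (by norm_num) (by omega) (by norm_num) (by omega)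
        have e23 : runLengths (1::2::1::3::4::r::rest) = 2::3::runLengths (r::rest) :=
          rl_comp23 rest (by norm_num) (by omega) (by norm_num) (by norm_num) (by omega)
        have hmem := memYam_transfer κ [1,2,1,3,4] [1,2,3,1,4] (r::rest) rfl (by decide)
          q32b hz.1 hz.2.1
        have hrun := hz.2.2
        rw [e23] at hrun
        refine ⟨1::2::3::1::4::r::rest, ⟨⟨hmem.1, hmem.2, ?_⟩, ?_⟩, iota4 (r::rest)⟩
        · rw [e32]
          exact drop_swap (by norm_num) (by norm_num) (by rw [hc]; simp) hrun
        · rw [e32, hc]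
          exact ⟨c :: cs, rfl⟩

end
end

section
/- Let z ≥ 4, n ≥ z+2, and let κ be a content with Σ_i κ_i = n. Then there exists an injection ι from 𝒴_{(2,z)}(κ) into 𝒴_{(3,z−1)}(κ) such that r(ι(y)) = r(y) for every y, and whose image is exactly 𝒴_{(3,z−1)}(κ) \ 𝒴_{(3,z−1)}(κ; β), where β is the word (1,2,3,1,2,…,z−1) (the concatenation of the increasing runs 1,2,3 and 1,2,…,z−1). -/
open scoped Classical

noncomputable section

def chainW : ℕ → ℕ → List ℕ
  | _, 0 => []
  | a, k+1 => a :: chainW (a+1) k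

@[simp] lemma chainW_zero (a : ℕ) : chainW a 0 = [] := rfl
@[simp] lemma chainW_succ (a k : ℕ) : chainW a (k+1) = a :: chainW (a+1) k := rfl

@[simp] lemma length_chainW (a k : ℕ) : (chainW a k).length = k := by
  induction k generalizing a with
  | zero => rfl
  | succ k ih => simp [ih]

lemma count_chainW (a k i : ℕ) : (chainW a k).count i = if a ≤ i ∧ i < a + k then 1 else 0 := by
  induction k generalizing a with
  | zero => simp only [chainW_zero, List.count_nil]; split_ifs <;> omega
  | succ k ih =>
    simp only [chainW_succ, List.count_cons, ih (a+1), beq_iff_eq]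
    split_ifs <;> omega

lemma take_chainW (a k m : ℕ) : (chainW a k).take m = chainW a (min m k) := by
  induction k generalizing a m with
  | zero => simp
  | succ k ih =>
    cases m with
    | zero => simp
    | succ m => simp [ih, Nat.succ_min_succ]

lemma mem_chainW {a k v : ℕ} : v ∈ chainW a k ↔ a ≤ v ∧ v < a + k := by
  induction k generalizing a with
  | zero => simp
  | succ k ih => simp [ih]; omega

lemma chain'_chainW (a k : ℕ) : (chainW a k).Chain' (· < ·) := by
  induction k generalizing a with
  | zero => exact List.isChain_nil
  | succ k ih =>
    cases k with
    | zero => exact List.isChain_singleton _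
    | succ k => exact List.IsChain.cons_cons (by omega) (ih (a+1))

lemma getLast?_chainW (a k : ℕ) (hk : 1 ≤ k) : (chainW a k).getLast? = some (a + k - 1) := by
  induction k generalizing a with
  | zero => omega
  | succ k ih =>
    cases k with
    | zero => simp
    | succ k =>
      show (a :: (a+1) :: chainW (a+2) k).getLast? = _
      rw [List.getLast?_cons_cons, ← chainW_succ, ih (a+1) (by omega)]
      congr 1
      omega

lemma runLengths_cons_pos : ∀ (l : List ℕ) (x : ℕ) (L : List ℕ), runLengths l = x :: L → 1 ≤ x
  | [], _, _, h => by simp [runLengths] at h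
  | [a], _, _, h => by simp [runLengths] at h; omega
  | a :: b :: l, x, L, h => by
    rw [runLengths] at h
    split_ifs at h with hab
    · rcases hrl : runLengths (b :: l) with _ | ⟨c, cs⟩ <;> rw [hrl] at h <;>
        simp_all <;> omega
    · simp at h; omega

lemma runLengths_append : ∀ (l t : List ℕ), l.Chain' (· < ·) → l ≠ [] →
    (∀ x ∈ l.getLast?, ∀ u ∈ t.head?, ¬ x < u) →
    runLengths (l ++ t) = if t = [] then [l.length] else l.length :: runLengths t
  | [], _, _, hne, _ => absurd rfl hne
  | [x], t, _, _, hb => by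
    cases t with
    | nil => simp [runLengths]
    | cons u t' =>
      have hxu : ¬ x < u := hb x (by simp) u (by simp)
      simp only [List.singleton_append, List.length_singleton]
      rw [runLengths, if_neg hxu]
      simp
  | x :: y :: l', t, hl, _, hb => by
    have h1 : x < y := (List.isChain_cons_cons.mp hl).1
    have ih := runLengths_append (y :: l') t (List.isChain_cons_cons.mp hl).2 (by simp)
      (by intro p hp u hu; exact hb p (by rw [List.getLast?_cons_cons]; exact hp) u hu)
    show runLengths (x :: (y :: l' ++ t)) = _
    rw [show (y :: l' ++ t) = (y :: (l' ++ t)) by simp]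
    rw [runLengths, if_pos h1]
    rw [show (y :: (l' ++ t)) = ((y :: l') ++ t) by simp] 
    rw [ih]
    by_cases ht : t = [] <;> simp [ht]

lemma runLengths_ne_nil : ∀ (l : List ℕ), l ≠ [] → runLengths l ≠ []
  | [], h => absurd rfl h
  | [a], _ => by simp [runLengths]
  | a :: b :: l, _ => by
    rw [runLengths]
    split_ifs
    · rcases h : runLengths (b :: l) with _ | ⟨c, cs⟩ <;> simp [h]
    · simp

lemma runLengths_decomp : ∀ (y : List ℕ) (k : ℕ) (L : List ℕ), runLengths y = k :: L →
    ∃ c t, y = c ++ t ∧ c.Chain' (· < ·) ∧ c.length = k ∧ runLengths t = L ∧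
      (∀ x ∈ c.getLast?, ∀ u ∈ t.head?, ¬ x < u)
  | [], _, _, h => by simp [runLengths] at h
  | [a], k, L, h => by
    obtain ⟨h1, h2⟩ : 1 = k ∧ ([] : List ℕ) = L := by simpa [runLengths] using h
    exact ⟨[a], [], by simp, List.isChain_singleton _, by simp [← h1], by simp [runLengths, ← h2], by simp⟩
  | a :: b :: l, k, L, h => by
    rw [runLengths] at h
    split_ifs at h with hab
    · rcases hrl : runLengths (b :: l) with _ | ⟨c0, cs⟩
      · exact absurd hrl (runLengths_ne_nil _ (by simp))
      · rw [hrl] at h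
        obtain ⟨hk, hL⟩ : c0 + 1 = k ∧ cs = L := by simpa using h
        obtain ⟨c, t, hct, hc, hlen, hrt, hbd⟩ := runLengths_decomp (b :: l) c0 cs hrl
        rcases c with _ | ⟨p, c'⟩
        · have := runLengths_cons_pos (b :: l) c0 cs hrl
          simp at hlen; omega
        · have hpb : p = b := by
            have := congrArg List.head? hct
            simpa using this.symm
          subst hpb
          refine ⟨a :: p :: c', t, by simpa using hct, ?_, by simp at hlen ⊢; omega,
            by rw [hrt, hL], ?_⟩
          · exact List.isChain_cons_cons.mpr ⟨hab, hc⟩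
          · intro x hx u hu
            exact hbd x (by rwa [List.getLast?_cons_cons] at hx) u hu
    · obtain ⟨hk, hL⟩ : 1 = k ∧ runLengths (b :: l) = L := by simpa using h
      exact ⟨[a], b :: l, by simp, List.isChain_singleton _, by simp [← hk], hL, by simpa using hab⟩

lemma count_take_append (a k : ℕ) (r : List ℕ) (m i : ℕ) :
    ((chainW a k ++ r).take m).count i =
      (if a ≤ i ∧ i < a + min m k then 1 else 0) + (r.take (m - k)).count i := by
  rw [List.take_append, List.count_append, take_chainW, count_chainW,
    length_chainW]

lemma count_take_chainW (a k m i : ℕ) :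
    ((chainW a k).take m).count i = if a ≤ i ∧ i < a + min m k then 1 else 0 := by
  rw [take_chainW, count_chainW]

/-- the five prefix words -/
def wA (z : ℕ) : List ℕ := chainW 1 2 ++ chainW 1 z
def wB (z : ℕ) : List ℕ := chainW 1 2 ++ (chainW 1 1 ++ chainW 3 (z-1))
def wC (z : ℕ) : List ℕ := chainW 1 3 ++ chainW 1 (z-1)
def wD (z : ℕ) : List ℕ := chainW 1 3 ++ (chainW 1 2 ++ chainW 4 (z-3))
def wE (z : ℕ) : List ℕ := chainW 1 3 ++ (chainW 1 1 ++ chainW 4 (z-2))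

variable {z : ℕ}

lemma len_wA (hz : 4 ≤ z) : (wA z).length = z + 2 := by simp [wA]
lemma len_wB (hz : 4 ≤ z) : (wB z).length = z + 2 := by simp [wB]; omega
lemma len_wC (hz : 4 ≤ z) : (wC z).length = z + 2 := by simp [wC]; omega
lemma len_wD (hz : 4 ≤ z) : (wD z).length = z + 2 := by simp [wD]; omega
lemma len_wE (hz : 4 ≤ z) : (wE z).length = z + 2 := by simp [wE]; omega

lemma count_wA_eq_wD (hz : 4 ≤ z) (i : ℕ) : (wA z).count i = (wD z).count i := by
  simp only [wA, wD, List.count_append, count_chainW]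
  split_ifs <;> omega

lemma count_wB_eq_wE (hz : 4 ≤ z) (i : ℕ) : (wB z).count i = (wE z).count i := by
  simp only [wB, wE, List.count_append, count_chainW]
  split_ifs <;> omega

lemma yam_wA (hz : 4 ≤ z) (m i : ℕ) (hi : 1 ≤ i) :
    ((wA z).take m).count (i+1) ≤ ((wA z).take m).count i := by
  simp only [wA, count_take_append, count_take_chainW]
  split_ifs <;> omega

lemma yam_wB (hz : 4 ≤ z) (m i : ℕ) (hi : 1 ≤ i) :
    ((wB z).take m).count (i+1) ≤ ((wB z).take m).count i := by
  simp only [wB, count_take_append, count_take_chainW]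
  split_ifs <;> omega

lemma yam_wD (hz : 4 ≤ z) (m i : ℕ) (hi : 1 ≤ i) :
    ((wD z).take m).count (i+1) ≤ ((wD z).take m).count i := by
  simp only [wD, count_take_append, count_take_chainW]
  split_ifs <;> omega

lemma yam_wE (hz : 4 ≤ z) (m i : ℕ) (hi : 1 ≤ i) :
    ((wE z).take m).count (i+1) ≤ ((wE z).take m).count i := by
  simp only [wE, count_take_append, count_take_chainW]
  split_ifs <;> omega

lemma head?_chainW (a k : ℕ) (hk : 1 ≤ k) : (chainW a k).head? = some a := by
  cases k with
  | zero => omega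
  | succ k => simp

lemma rl_two_runs (c1 c2 t : List ℕ) (h1 : c1.Chain' (· < ·)) (h2 : c2.Chain' (· < ·))
    (hn1 : c1 ≠ []) (hn2 : c2 ≠ [])
    (hb1 : ∀ x ∈ c1.getLast?, ∀ u ∈ c2.head?, ¬ x < u)
    (hb2 : ∀ x ∈ c2.getLast?, ∀ u ∈ t.head?, ¬ x < u) :
    runLengths (c1 ++ c2 ++ t) =
      if t = [] then [c1.length, c2.length] else c1.length :: c2.length :: runLengths t := by
  rw [List.append_assoc, runLengths_append c1 (c2 ++ t) h1 hn1]
  · rw [runLengths_append c2 t h2 hn2 hb2]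
    rcases t with _ | ⟨u, t'⟩ <;> simp [hn2]
  · intro x hx u hu
    rcases c2 with _ | ⟨b, c2'⟩
    · exact absurd rfl hn2
    · simp at hu
      exact hb1 x hx u (by simpa using hu)

lemma chain'_cons_chainW (b a k : ℕ) (hba : b < a) : (b :: chainW a k).Chain' (· < ·) := by
  cases k with
  | zero => exact List.isChain_singleton _
  | succ k => exact List.isChain_cons_cons.mpr ⟨hba, chain'_chainW a (k+1)⟩

lemma chainW_ne_nil (a k : ℕ) (hk : 1 ≤ k) : chainW a k ≠ [] := by
  cases k with
  | zero => omega
  | succ k => simp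

lemma rl_wA (hz : 4 ≤ z) (t : List ℕ) (ht : ∀ u ∈ t.head?, ¬ (z : ℕ) < u) :
    runLengths (wA z ++ t) = if t = [] then [2, z] else 2 :: z :: runLengths t := by
  rw [wA, rl_two_runs (chainW 1 2) (chainW 1 z) t (chain'_chainW _ _) (chain'_chainW _ _)
    (chainW_ne_nil _ _ (by omega)) (chainW_ne_nil _ _ (by omega))
    (by intro x hx u hu
        rw [getLast?_chainW 1 2 (by omega)] at hx
        rw [head?_chainW 1 z (by omega)] at hu
        simp at hx hu; omega)
    (by intro x hx u hu
        rw [getLast?_chainW 1 z (by omega)] at hx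
        have hx' : x = z := by simp at hx; omega
        subst hx'; exact ht u hu)]
  simp

lemma getLast?_cons_chainW (b a k : ℕ) (hk : 1 ≤ k) :
    (b :: chainW a k).getLast? = some (a + k - 1) := by
  cases k with
  | zero => omega
  | succ k =>
    rw [chainW_succ, List.getLast?_cons_cons, ← chainW_succ, getLast?_chainW _ _ (by omega)]

lemma rl_wB (hz : 4 ≤ z) (t : List ℕ) (ht : ∀ u ∈ t.head?, ¬ (z + 1 : ℕ) < u) :
    runLengths (wB z ++ t) = if t = [] then [2, z] else 2 :: z :: runLengths t := by
  have hc2 : chainW 1 1 ++ chainW 3 (z-1) = 1 :: chainW 3 (z-1) := rfl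
  rw [wB, rl_two_runs (chainW 1 2) (chainW 1 1 ++ chainW 3 (z-1)) t (chain'_chainW _ _)
    (by rw [hc2]; exact chain'_cons_chainW _ _ _ (by omega))
    (chainW_ne_nil _ _ (by omega)) (by rw [hc2]; simp)
    (by intro x hx u hu
        rw [getLast?_chainW 1 2 (by omega)] at hx
        rw [hc2] at hu
        simp at hx hu; omega)
    (by intro x hx u hu
        rw [hc2, getLast?_cons_chainW _ _ _ (by omega)] at hx
        have hx' : x = z + 1 := by simp at hx; omega
        subst hx'; exact ht u hu)]
  have hl : (chainW 1 1 ++ chainW 3 (z-1)).length = z := by simp; omega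
  rw [hl]; simp

lemma rl_wC (hz : 4 ≤ z) (t : List ℕ) (ht : ∀ u ∈ t.head?, ¬ (z - 1 : ℕ) < u) :
    runLengths (wC z ++ t) = if t = [] then [3, z-1] else 3 :: (z-1) :: runLengths t := by
  rw [wC, rl_two_runs (chainW 1 3) (chainW 1 (z-1)) t (chain'_chainW _ _) (chain'_chainW _ _)
    (chainW_ne_nil _ _ (by omega)) (chainW_ne_nil _ _ (by omega))
    (by intro x hx u hu
        rw [getLast?_chainW 1 3 (by omega)] at hx
        rw [head?_chainW 1 (z-1) (by omega)] at hu
        simp at hx hu; omega)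
    (by intro x hx u hu
        rw [getLast?_chainW 1 (z-1) (by omega)] at hx
        have hx' : x = z - 1 := by simp at hx; omega
        subst hx'; exact ht u hu)]
  simp

lemma rl_wD (hz : 4 ≤ z) (t : List ℕ) (ht : ∀ u ∈ t.head?, ¬ (z : ℕ) < u) :
    runLengths (wD z ++ t) = if t = [] then [3, z-1] else 3 :: (z-1) :: runLengths t := by
  have hc2 : chainW 1 2 ++ chainW 4 (z-3) = 1 :: 2 :: chainW 4 (z-3) := rfl
  rw [wD, rl_two_runs (chainW 1 3) (chainW 1 2 ++ chainW 4 (z-3)) t (chain'_chainW _ _)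
    (by rw [hc2]
        exact List.isChain_cons_cons.mpr ⟨by omega, chain'_cons_chainW _ _ _ (by omega)⟩)
    (chainW_ne_nil _ _ (by omega)) (by rw [hc2]; simp)
    (by intro x hx u hu
        rw [getLast?_chainW 1 3 (by omega)] at hx
        rw [hc2] at hu
        simp at hx hu; omega)
    (by intro x hx u hu
        rw [hc2, List.getLast?_cons_cons, getLast?_cons_chainW _ _ _ (by omega)] at hx
        have hx' : x = z := by simp at hx; omega
        subst hx'; exact ht u hu)]
  have hl : (chainW 1 2 ++ chainW 4 (z-3)).length = z - 1 := by simp; omega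
  rw [hl]; simp

lemma rl_wE (hz : 4 ≤ z) (t : List ℕ) (ht : ∀ u ∈ t.head?, ¬ (z + 1 : ℕ) < u) :
    runLengths (wE z ++ t) = if t = [] then [3, z-1] else 3 :: (z-1) :: runLengths t := by
  have hc2 : chainW 1 1 ++ chainW 4 (z-2) = 1 :: chainW 4 (z-2) := rfl
  rw [wE, rl_two_runs (chainW 1 3) (chainW 1 1 ++ chainW 4 (z-2)) t (chain'_chainW _ _)
    (by rw [hc2]; exact chain'_cons_chainW _ _ _ (by omega))
    (chainW_ne_nil _ _ (by omega)) (by rw [hc2]; simp)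
    (by intro x hx u hu
        rw [getLast?_chainW 1 3 (by omega)] at hx
        rw [hc2] at hu
        simp at hx hu; omega)
    (by intro x hx u hu
        rw [hc2, getLast?_cons_chainW _ _ _ (by omega)] at hx
        have hx' : x = z + 1 := by simp at hx; omega
        subst hx'; exact ht u hu)]
  have hl : (chainW 1 1 ++ chainW 4 (z-2)).length = z - 1 := by simp; omega
  rw [hl]; simp

lemma yam_transfer_s15 (u v t : List ℕ) (hlen : u.length = v.length)
    (hcnt : ∀ i, u.count i = v.count i)
    (hv : ∀ m i, 1 ≤ i → ((v.take m).count (i+1)) ≤ (v.take m).count i)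
    (hu : ∀ m i, 1 ≤ i → (((u++t).take m).count (i+1)) ≤ ((u++t).take m).count i) :
    ∀ m i, 1 ≤ i → (((v++t).take m).count (i+1)) ≤ ((v++t).take m).count i := by
  intro m i hi
  by_cases hm : m ≤ v.length
  · rw [List.take_append, show m - v.length = 0 by omega]
    simpa using hv m i hi
  · have key : ∀ j, ((v++t).take m).count j = ((u++t).take m).count j := by
      intro j
      have h1 : v.take m = v := List.take_of_length_le (by omega)
      have h2 : u.take m = u := List.take_of_length_le (by omega)
      rw [List.take_append, List.take_append, h1, h2,
        List.count_append, List.count_append, hcnt, hlen]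
    rw [key, key]
    exact hu m i hi

lemma sorted_takeWhile_eq_filter (v : ℕ) :
    ∀ (d : List ℕ), d.Chain' (· < ·) →
      d.takeWhile (fun x => decide (x ≤ v)) = d.filter (fun x => decide (x ≤ v))
  | [], _ => rfl
  | b :: d', hd => by
    by_cases hb : b ≤ v
    · rw [List.takeWhile_cons_of_pos (by simpa using hb), List.filter_cons_of_pos (by simpa using hb),
        sorted_takeWhile_eq_filter v d' hd.tail]
    · rw [List.takeWhile_cons_of_neg (by simpa using hb), List.filter_cons_of_neg (by simpa using hb)]
      have hall : ∀ x ∈ d', ¬ x ≤ v := by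
        intro x hx
        have hbx : b < x := List.rel_of_pairwise_cons (List.isChain_iff_pairwise.mp hd) hx
        omega
      rw [eq_comm, List.filter_eq_nil_iff]
      intro x hx
      simpa using hall x hx

lemma yam_run_cond (pre c t : List ℕ) (hc : c.Chain' (· < ·))
    (hyam : ∀ m i, 1 ≤ i → ((pre ++ c ++ t).take m).count (i+1) ≤ ((pre ++ c ++ t).take m).count i)
    (v : ℕ) (hv : v ∈ c) (h2 : 2 ≤ v) :
    pre.count v + 1 ≤ pre.count (v-1) + (if v-1 ∈ c then 1 else 0) := by
  have nd : c.Nodup := (List.isChain_iff_pairwise.mp hc).imp (fun h => Nat.ne_of_lt h)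
  set f := c.filter (fun x => decide (x ≤ v)) with hf
  have tw : c.takeWhile (fun x => decide (x ≤ v)) = f := sorted_takeWhile_eq_filter v c hc
  have hfl : f.length ≤ c.length := List.length_filter_le _ _
  have htake : (pre ++ c ++ t).take (pre.length + f.length) = pre ++ f := by
    rw [List.append_assoc, List.take_append,
      List.take_of_length_le (by omega), Nat.add_sub_cancel_left,
      List.take_append, Nat.sub_eq_zero_of_le hfl, List.take_zero,
      List.append_nil, ← tw, ← List.prefix_iff_eq_take.mp (List.takeWhile_prefix _)]
  have h := hyam (pre.length + f.length) (v-1) (by omega)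
  rw [htake] at h
  rw [show v - 1 + 1 = v by omega] at h
  rw [List.count_append, List.count_append] at h
  have hfv : f.count v = 1 := by
    rw [hf, List.count_filter (by simp)]
    exact List.count_eq_one_of_mem nd hv
  have hfv1 : f.count (v-1) ≤ if v - 1 ∈ c then 1 else 0 := by
    have : f.count (v-1) ≤ c.count (v-1) := (List.filter_sublist).count_le _
    rw [show c.count (v-1) = if v-1 ∈ c then 1 else 0 from by
      split_ifs with hm
      · exact List.count_eq_one_of_mem nd hm
      · exact List.count_eq_zero.mpr hm] at this
    split_ifs at this ⊢ <;> omega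
  split_ifs with hmem
  · split_ifs at hfv1 <;> omega
  · split_ifs at hfv1 <;> omega

lemma consec : ∀ (d : List ℕ) (a : ℕ), 3 ≤ a → d.Chain' (· < ·) → (∀ v ∈ d, a ≤ v) →
    (∀ v ∈ d, v = a ∨ v - 1 ∈ d) → d = chainW a d.length
  | [], _, _, _, _, _ => by simp
  | b :: d', a, h3, hd, hge, hpred => by
    have hb3 : 3 ≤ b := le_trans h3 (hge b (by simp))
    have hba : b = a := by
      rcases hpred b (by simp) with h | h
      · exact h
      · rcases (by simpa using h : b - 1 = b ∨ b - 1 ∈ d') with h' | h'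
        · omega
        · have := List.rel_of_pairwise_cons (List.isChain_iff_pairwise.mp hd) h'
          omega
    subst hba
    have hgt : ∀ v ∈ d', b < v :=
      fun v hv => List.rel_of_pairwise_cons (List.isChain_iff_pairwise.mp hd) hv
    have hrec := consec d' (b+1) (by omega) hd.tail (fun v hv => hgt v hv)
      (fun v hv => by
        rcases hpred v (by simp [hv]) with h | h
        · exact absurd h (by have := hgt v hv; omega)
        · rcases (by simpa using h : v - 1 = b ∨ v - 1 ∈ d') with h' | h'
          · left; omega
          · right; exact h')
    rw [List.length_cons, chainW_succ, ← hrec]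

lemma chainW_1z (hz : 4 ≤ z) : chainW 1 z = 1 :: 2 :: chainW 3 (z-2) := by
  rw [show z = z-2+1+1 by omega, chainW_succ, chainW_succ]
  norm_num
  rw [show z - 2 + 1 + 1 - 2 = z - 2 by omega]

lemma structure_2z (hz : 4 ≤ z) (y : List ℕ) (h0 : (0:ℕ) ∉ y)
    (hyam : ∀ m i, 1 ≤ i → ((y.take m).count (i+1)) ≤ (y.take m).count i)
    (hrt : [2, z] <+: runLengths y) :
    ∃ t, (y = wA z ++ t ∧ (∀ u ∈ t.head?, ¬ (z:ℕ) < u)) ∨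
         (y = wB z ++ t ∧ (∀ u ∈ t.head?, ¬ (z+1:ℕ) < u)) := by
  obtain ⟨r, hr⟩ := hrt
  obtain ⟨c1, t1, hy1, hcc1, hl1, hrt1, hb1⟩ := runLengths_decomp y 2 (z :: r) hr.symm
  obtain ⟨c2, t, hy2, hcc2, hl2, hrt2, hb2⟩ := runLengths_decomp t1 z r hrt1
  -- c1 = [p, q]
  rcases c1 with _ | ⟨p, c1'⟩; · simp at hl1
  rcases c1' with _ | ⟨q, c1''⟩; · simp at hl1
  rcases c1'' with _ | ⟨_, _⟩; swap; · simp at hl1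
  -- c2 = 1 :: b :: d3
  rcases c2 with _ | ⟨h, d2⟩; · simp at hl2; omega
  rcases d2 with _ | ⟨b, d3⟩; · simp at hl2; omega
  subst hy2
  subst hy1
  have hpq : p < q := List.isChain_pair.mp hcc1
  have hp : p = 1 := by
    have hp0 : p ≠ 0 := by intro h'; exact h0 (by simp [h'])
    by_contra hne
    have := hyam 1 (p-1) (by omega)
    rw [show (([p, q] ++ (h :: b :: d3 ++ t)).take 1) = [p] by simp] at this
    rw [show p - 1 + 1 = p by omega] at this
    simp [List.count_singleton, (show p - 1 ≠ p by omega), (show p ≠ p - 1 by omega)] at this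
  have hq : q = 2 := by
    by_contra hne
    have hq3 : 3 ≤ q := by omega
    have := hyam 2 (q-1) (by omega)
    rw [show (([p, q] ++ (h :: b :: d3 ++ t)).take 2) = [p, q] by simp] at this
    rw [show q - 1 + 1 = q by omega] at this
    simp [List.count_cons, hp, (show q - 1 ≠ q by omega), (show ¬ (q = p) by omega),
      (show q - 1 ≠ p by omega)] at this
    split_ifs at this <;> omega
  have hh : h = 1 := by
    have hh0 : h ≠ 0 := by intro h'; exact h0 (by simp [h'])
    have hh2 : h ≤ 2 := by
      have := hb1 q (by simp) h (by simp)
      omega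
    rcases (by omega : h = 1 ∨ h = 2) with h1 | h2
    · exact h1
    · exfalso; subst h2
      have := hyam 3 1 (by omega)
      rw [show (([p, q] ++ (2 :: b :: d3 ++ t)).take 3) = [p, q, 2] by simp] at this
      simp [List.count_cons, hp, hq] at this
  subst hp; subst hq; subst hh
  -- the predecessor condition
  have hcond : ∀ v ∈ (1 :: b :: d3), 4 ≤ v → v - 1 ∈ (1 :: b :: d3) := by
    intro v hv hv4
    have := yam_run_cond [1, 2] (1 :: b :: d3) t hcc2
      (by intro m i hi; have := hyam m i hi; simpa using this) v hv (by omega)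
    by_cases hmem : v - 1 ∈ 1 :: b :: d3
    · exact hmem
    · exfalso
      rw [if_neg hmem] at this
      simp only [List.count_cons, List.count_nil, beq_iff_eq] at this
      split_ifs at this <;> omega
  have hpair := List.isChain_iff_pairwise.mp hcc2
  have h1b : 1 < b := (List.isChain_cons_cons.mp hcc2).1
  have hd3 : ∀ v ∈ d3, b < v := fun v hv => List.rel_of_pairwise_cons (List.pairwise_cons.mp hpair).2 hv
  have hb23 : b = 2 ∨ b = 3 := by
    by_contra hne
    have hb4 : 4 ≤ b := by omega
    have := hcond b (by simp) hb4
    rcases (by simpa using this : b - 1 = 1 ∨ b - 1 = b ∨ b - 1 ∈ d3) with h' | h' | h'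
    · omega
    · omega
    · have := hd3 _ h'; omega
  have hlen3 : d3.length = z - 2 := by simp at hl2; omega
  rcases hb23 with hb | hb
  · -- b = 2 : wA case
    subst hb
    rcases d3 with _ | ⟨e, d4⟩; · exfalso; simp at hlen3; omega
    have he : e = 3 := by
      by_contra hne
      have he3 : 2 < e := hd3 e (by simp)
      have he4 : 4 ≤ e := by omega
      have := hcond e (by simp) he4
      have hd4 : ∀ v ∈ d4, e < v := fun v hv =>
        List.rel_of_pairwise_cons (List.pairwise_cons.mp (List.pairwise_cons.mp hpair).2).2 hv
      rcases (by simpa using this : e - 1 = 1 ∨ e - 1 = 2 ∨ e - 1 = e ∨ e - 1 ∈ d4)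
        with h' | h' | h' | h'
      · omega
      · omega
      · omega
      · have := hd4 _ h'; omega
    subst he
    have hd3eq : (3 :: d4) = chainW 3 (3 :: d4).length := by
      apply consec _ _ (by omega) hcc2.tail.tail
      · intro v hv
        rcases List.mem_cons.mp hv with h' | h'
        · omega
        · have := List.rel_of_pairwise_cons (List.pairwise_cons.mp (List.pairwise_cons.mp hpair).2).2 h'; omega
      · intro v hv
        rcases List.mem_cons.mp hv with h' | h'
        · left; exact h'
        · right
          have hv3 : 3 < v := List.rel_of_pairwise_cons (List.pairwise_cons.mp (List.pairwise_cons.mp hpair).2).2 h'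
          have := hcond v (by simp [h']) (by omega)
          rcases (by simpa using this : v - 1 = 1 ∨ v - 1 = 2 ∨ v - 1 ∈ 3 :: d4) with h'' | h'' | h''
          · omega
          · omega
          · exact h''
    refine ⟨t, Or.inl ⟨?_, ?_⟩⟩
    · rw [wA, chainW_1z hz]
      have : (3 :: d4).length = z - 2 := by simp at hlen3 ⊢; omega
      rw [this] at hd3eq
      rw [← hd3eq]
      simp [chainW]
    · intro u hu
      have h32 : (3 :: d4) = chainW 3 (z-2) := by
        rw [hd3eq, show (3 :: d4).length = z - 2 from hlen3]
      have hlast : (1 :: 2 :: 3 :: d4).getLast? = some z := by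
        rw [show (1 :: 2 :: 3 :: d4) = 1 :: 2 :: (3 :: d4) from rfl, h32,
          List.getLast?_cons_cons, getLast?_cons_chainW _ _ _ (by omega)]
        congr 1; omega
      exact hb2 z (by simp [hlast]) u hu
  · -- b = 3 : wB case
    subst hb
    have hd3eq : (3 :: d3) = chainW 3 (3 :: d3).length := by
      apply consec _ _ (by omega) hcc2.tail
      · intro v hv
        rcases List.mem_cons.mp hv with h' | h'
        · omega
        · have := hd3 v h'; omega
      · intro v hv
        rcases List.mem_cons.mp hv with h' | h'
        · left; exact h'
        · right
          have hv3 : 3 < v := hd3 v h'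
          have := hcond v (by simp [h']) (by omega)
          rcases (by simpa using this : v - 1 = 1 ∨ v - 1 ∈ 3 :: d3) with h'' | h''
          · omega
          · exact h''
    have hlen' : (3 :: d3).length = z - 1 := by simp at hl2 ⊢; omega
    rw [hlen'] at hd3eq
    refine ⟨t, Or.inr ⟨?_, ?_⟩⟩
    · rw [wB]
      rw [show chainW 1 1 ++ chainW 3 (z-1) = 1 :: chainW 3 (z-1) from rfl, ← hd3eq]
      simp [chainW]
    · intro u hu
      have hlast : (1 :: 3 :: d3).getLast? = some (z+1) := by
        rw [show (1 :: 3 :: d3) = 1 :: (3 :: d3) from rfl, hd3eq,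
          getLast?_cons_chainW _ _ _ (by omega)]
        congr 1; omega
      exact hb2 (z+1) (by simp [hlast]) u hu

lemma chainW_12 (k : ℕ) (hk : 2 ≤ k) : chainW 1 k = 1 :: 2 :: chainW 3 (k-2) := by
  rw [show k = k-2+1+1 by omega, chainW_succ, chainW_succ]
  norm_num
  rw [show k - 2 + 1 + 1 - 2 = k - 2 by omega]

lemma structure_3z (hz : 4 ≤ z) (y : List ℕ) (h0 : (0:ℕ) ∉ y)
    (hyam : ∀ m i, 1 ≤ i → ((y.take m).count (i+1)) ≤ (y.take m).count i)
    (hrt : [3, z-1] <+: runLengths y) :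
    ∃ t, (y = wC z ++ t ∧ (∀ u ∈ t.head?, ¬ (z-1:ℕ) < u)) ∨
         (y = wD z ++ t ∧ (∀ u ∈ t.head?, ¬ (z:ℕ) < u)) ∨
         (y = wE z ++ t ∧ (∀ u ∈ t.head?, ¬ (z+1:ℕ) < u)) := by
  obtain ⟨r, hr⟩ := hrt
  obtain ⟨c1, t1, hy1, hcc1, hl1, hrt1, hb1⟩ := runLengths_decomp y 3 ((z-1) :: r) hr.symm
  obtain ⟨c2, t, hy2, hcc2, hl2, hrt2, hb2⟩ := runLengths_decomp t1 (z-1) r hrt1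
  rcases c1 with _ | ⟨p, c1'⟩; · simp at hl1
  rcases c1' with _ | ⟨q, c1''⟩; · simp at hl1
  rcases c1'' with _ | ⟨s, c1'''⟩; · simp at hl1
  rcases c1''' with _ | ⟨_, _⟩; swap; · simp at hl1
  rcases c2 with _ | ⟨h, d2⟩; · simp at hl2; omega
  rcases d2 with _ | ⟨b, d3⟩; · simp at hl2; omega
  subst hy2
  subst hy1
  have hpq : p < q ∧ q < s := by
    have := List.isChain_iff_pairwise.mp hcc1
    constructor
    · exact List.rel_of_pairwise_cons this (by simp)
    · exact List.rel_of_pairwise_cons (List.pairwise_cons.mp this).2 (by simp)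
  have hp : p = 1 := by
    have hp0 : p ≠ 0 := by intro h'; exact h0 (by simp [h'])
    by_contra hne
    have := hyam 1 (p-1) (by omega)
    rw [show (([p, q, s] ++ (h :: b :: d3 ++ t)).take 1) = [p] by simp] at this
    rw [show p - 1 + 1 = p by omega] at this
    simp [List.count_singleton, (show p - 1 ≠ p by omega), (show p ≠ p - 1 by omega)] at this
  have hq : q = 2 := by
    by_contra hne
    have hq3 : 3 ≤ q := by omega
    have := hyam 2 (q-1) (by omega)
    rw [show (([p, q, s] ++ (h :: b :: d3 ++ t)).take 2) = [p, q] by simp] at this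
    rw [show q - 1 + 1 = q by omega] at this
    simp [List.count_cons, hp, (show q - 1 ≠ q by omega), (show ¬ (q = p) by omega),
      (show q - 1 ≠ p by omega)] at this
    split_ifs at this <;> omega
  have hs : s = 3 := by
    by_contra hne
    have hs4 : 4 ≤ s := by omega
    have := hyam 3 (s-1) (by omega)
    rw [show (([p, q, s] ++ (h :: b :: d3 ++ t)).take 3) = [p, q, s] by simp] at this
    rw [show s - 1 + 1 = s by omega] at this
    simp only [List.count_cons, List.count_nil, beq_iff_eq] at this
    split_ifs at this <;> omega
  subst hp; subst hq; subst hs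
  have hh : h = 1 := by
    have hh0 : h ≠ 0 := by intro h'; exact h0 (by simp [h'])
    have hh3 : h ≤ 3 := by
      have := hb1 3 (by simp) h (by simp)
      omega
    rcases (by omega : h = 1 ∨ h = 2 ∨ h = 3) with h1 | h2 | h3
    · exact h1
    · exfalso; subst h2
      have := hyam 4 1 (by omega)
      have e : (([1, 2, 3] : List ℕ) ++ (2 :: b :: d3 ++ t)).take 4 = [1, 2, 3, 2] := rfl
      rw [e] at this
      simp only [List.count_cons, List.count_nil, beq_iff_eq] at this
      split_ifs at this <;> omega
    · exfalso; subst h3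
      have := hyam 4 2 (by omega)
      have e : (([1, 2, 3] : List ℕ) ++ (3 :: b :: d3 ++ t)).take 4 = [1, 2, 3, 3] := rfl
      rw [e] at this
      simp only [List.count_cons, List.count_nil, beq_iff_eq] at this
      split_ifs at this <;> omega
  subst hh
  have hyam' : ∀ m i, 1 ≤ i →
      (([1,2,3] ++ (1 :: b :: d3) ++ t).take m).count (i+1) ≤
      (([1,2,3] ++ (1 :: b :: d3) ++ t).take m).count i := by
    intro m i hi; have := hyam m i hi; simpa using this
  have hcond5 : ∀ v ∈ (1 :: b :: d3), 5 ≤ v → v - 1 ∈ (1 :: b :: d3) := by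
    intro v hv hv5
    have := yam_run_cond [1, 2, 3] (1 :: b :: d3) t hcc2 hyam' v hv (by omega)
    by_cases hmem : v - 1 ∈ 1 :: b :: d3
    · exact hmem
    · exfalso
      rw [if_neg hmem] at this
      simp only [List.count_cons, List.count_nil, beq_iff_eq] at this
      split_ifs at this <;> omega
  have hcond3 : 3 ∈ (1 :: b :: d3) → 2 ∈ (1 :: b :: d3) := by
    intro h3
    have := yam_run_cond [1, 2, 3] (1 :: b :: d3) t hcc2 hyam' 3 h3 (by omega)
    by_cases hmem : (2:ℕ) ∈ 1 :: b :: d3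
    · exact hmem
    · exfalso
      rw [show (3:ℕ) - 1 = 2 from rfl, if_neg hmem] at this
      simp only [List.count_cons, List.count_nil, beq_iff_eq] at this
      split_ifs at this <;> omega
  have hpair := List.isChain_iff_pairwise.mp hcc2
  have h1b : 1 < b := (List.isChain_cons_cons.mp hcc2).1
  have hd3 : ∀ v ∈ d3, b < v := fun v hv => List.rel_of_pairwise_cons (List.pairwise_cons.mp hpair).2 hv
  have hlen3 : d3.length = z - 3 := by simp at hl2; omega
  have hb24 : b = 2 ∨ b = 4 := by
    by_contra hne
    rcases (by omega : b = 3 ∨ 5 ≤ b) with h3 | h5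
    · subst h3
      have := hcond3 (by simp)
      rcases (by simpa using this : (2:ℕ) = 1 ∨ (2:ℕ) = 3 ∨ (2:ℕ) ∈ d3) with h' | h' | h'
      · omega
      · omega
      · have := hd3 _ h'; omega
    · have := hcond5 b (by simp) h5
      rcases (by simpa using this : b - 1 = 1 ∨ b - 1 = b ∨ b - 1 ∈ d3) with h' | h' | h'
      · omega
      · omega
      · have := hd3 _ h'; omega
  rcases hb24 with hb | hb
  · -- b = 2: wC or wD
    subst hb
    rcases d3 with _ | ⟨e, d4⟩; · exfalso; simp at hlen3; omega
    have hpair3 := (List.pairwise_cons.mp (List.pairwise_cons.mp hpair).2).2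
    have hd4 : ∀ v ∈ d4, e < v := fun v hv => List.rel_of_pairwise_cons hpair3 hv
    have he2 : 2 < e := hd3 e (by simp)
    have he34 : e = 3 ∨ e = 4 := by
      by_contra hne
      have he5 : 5 ≤ e := by omega
      have := hcond5 e (by simp) he5
      rcases (by simpa using this : e - 1 = 1 ∨ e - 1 = 2 ∨ e - 1 = e ∨ e - 1 ∈ d4)
        with h' | h' | h' | h'
      · omega
      · omega
      · omega
      · have := hd4 _ h'; omega
    rcases he34 with he | he
    · -- e = 3 : wC
      subst he
      have hd4eq : (3 :: d4) = chainW 3 (3 :: d4).length := by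
        apply consec _ _ (by omega) hcc2.tail.tail
        · intro v hv
          rcases List.mem_cons.mp hv with h' | h'
          · omega
          · have := hd4 v h'; omega
        · intro v hv
          rcases List.mem_cons.mp hv with h' | h'
          · left; exact h'
          · have hv3 : 3 < v := hd4 v h'
            rcases (by omega : v = 4 ∨ 5 ≤ v) with h4 | h5
            · right; simp [h4]
            · right
              have := hcond5 v (by simp [h']) h5
              rcases (by simpa using this : v - 1 = 1 ∨ v - 1 = 2 ∨ v - 1 = 3 ∨ v - 1 ∈ d4)
                with h'' | h'' | h'' | h''
              · omega
              · omega
              · simp [h'']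
              · simp [h'']
      have hlc : (3 :: d4).length = z - 3 := hlen3
      rw [hlc] at hd4eq
      refine ⟨t, Or.inl ⟨?_, ?_⟩⟩
      · rw [wC, chainW_12 (z-1) (by omega)]
        rw [show z - 1 - 2 = z - 3 by omega, ← hd4eq]
        simp [chainW]
      · intro u hu
        have hlast : (1 :: 2 :: 3 :: d4).getLast? = some (z-1) := by
          rw [show (1 :: 2 :: 3 :: d4) = 1 :: 2 :: (3 :: d4) from rfl, hd4eq,
            List.getLast?_cons_cons, getLast?_cons_chainW _ _ _ (by omega)]
          congr 1; omega
        exact hb2 (z-1) (by simp [hlast]) u hu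
    · -- e = 4 : wD
      subst he
      have hd4eq : (4 :: d4) = chainW 4 (4 :: d4).length := by
        apply consec _ _ (by omega) hcc2.tail.tail
        · intro v hv
          rcases List.mem_cons.mp hv with h' | h'
          · omega
          · have := hd4 v h'; omega
        · intro v hv
          rcases List.mem_cons.mp hv with h' | h'
          · left; exact h'
          · right
            have hv4 : 4 < v := hd4 v h'
            have := hcond5 v (by simp [h']) (by omega)
            rcases (by simpa using this : v - 1 = 1 ∨ v - 1 = 2 ∨ v - 1 = 4 ∨ v - 1 ∈ d4)
              with h'' | h'' | h'' | h''
            · omega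
            · omega
            · simp [h'']
            · simp [h'']
      have hlc : (4 :: d4).length = z - 3 := hlen3
      rw [hlc] at hd4eq
      refine ⟨t, Or.inr (Or.inl ⟨?_, ?_⟩)⟩
      · rw [wD]
        rw [show chainW 1 2 ++ chainW 4 (z-3) = 1 :: 2 :: chainW 4 (z-3) from rfl, ← hd4eq]
        simp [chainW]
      · intro u hu
        have hlast : (1 :: 2 :: 4 :: d4).getLast? = some z := by
          rw [show (1 :: 2 :: 4 :: d4) = 1 :: 2 :: (4 :: d4) from rfl, hd4eq,
            List.getLast?_cons_cons, getLast?_cons_chainW _ _ _ (by omega)]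
          congr 1; omega
        exact hb2 z (by simp [hlast]) u hu
  · -- b = 4 : wE
    subst hb
    have hd3eq : (4 :: d3) = chainW 4 (4 :: d3).length := by
      apply consec _ _ (by omega) hcc2.tail
      · intro v hv
        rcases List.mem_cons.mp hv with h' | h'
        · omega
        · have := hd3 v h'; omega
      · intro v hv
        rcases List.mem_cons.mp hv with h' | h'
        · left; exact h'
        · right
          have hv4 : 4 < v := hd3 v h'
          have := hcond5 v (by simp [h']) (by omega)
          rcases (by simpa using this : v - 1 = 1 ∨ v - 1 = 4 ∨ v - 1 ∈ d3)
            with h'' | h'' | h''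
          · omega
          · simp [h'']
          · simp [h'']
    have hlc : (4 :: d3).length = z - 2 := by simp [hlen3]; omega
    rw [hlc] at hd3eq
    refine ⟨t, Or.inr (Or.inr ⟨?_, ?_⟩)⟩
    · rw [wE]
      rw [show chainW 1 1 ++ chainW 4 (z-2) = 1 :: chainW 4 (z-2) from rfl, ← hd3eq]
      simp [chainW]
    · intro u hu
      have hlast : (1 :: 4 :: d3).getLast? = some (z+1) := by
        rw [show (1 :: 4 :: d3) = 1 :: (4 :: d3) from rfl, hd3eq,
          getLast?_cons_chainW _ _ _ (by omega)]
        congr 1; omega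
      exact hb2 (z+1) (by simp [hlast]) u hu

lemma memYam_trans (κ : ℕ → ℕ) (u v t : List ℕ) (a1 a2 b1 b2 : ℕ)
    (hlen : u.length = v.length) (hcnt : ∀ i, u.count i = v.count i)
    (hvyam : ∀ m i, 1 ≤ i → ((v.take m).count (i+1)) ≤ (v.take m).count i)
    (hru : runLengths (u ++ t) = if t = [] then [a1, a2] else a1 :: a2 :: runLengths t)
    (hrv : runLengths (v ++ t) = if t = [] then [b1, b2] else b1 :: b2 :: runLengths t)
    (hb1 : 2 ≤ b1) (hb2 : 2 ≤ b2)
    (h : MemYam κ (u ++ t)) : MemYam κ (v ++ t) := by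
  obtain ⟨hc, hy, hd⟩ := h
  refine ⟨?_, ?_, ?_⟩
  · intro i
    rw [List.count_append, ← hcnt, ← List.count_append]
    exact hc i
  · exact yam_transfer_s15 u v t hlen hcnt hvyam hy
  · rw [hrv]
    by_cases ht : t = []
    · simp [ht, hb1]
    · rw [if_neg ht]
      rw [hru, if_neg ht] at hd
      intro l hl
      rcases hrlt : runLengths t with _ | ⟨x, L'⟩
      · rw [hrlt] at hl
        simp at hl
        omega
      · rw [hrlt] at hl hd
        rw [List.dropLast_cons₂, List.dropLast_cons₂] at hl
        rcases List.mem_cons.mp hl with h' | hl2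
        · omega
        · rcases List.mem_cons.mp hl2 with h' | hl3
          · omega
          · refine hd l ?_
            rw [List.dropLast_cons₂, List.dropLast_cons₂]
            exact List.mem_cons_of_mem _ (List.mem_cons_of_mem _ hl3)

lemma pfx_eq {P Q y : List ℕ} (hp : P <+: y) (hq : Q <+: y) (h : P.length = Q.length) :
    P = Q := by
  rw [List.prefix_iff_eq_take.mp hp, List.prefix_iff_eq_take.mp hq, h]

lemma wA_ne_wB (hz : 4 ≤ z) : wA z ≠ wB z := by
  intro h
  have := congrArg (List.count 2) h
  simp only [wA, wB, List.count_append, count_chainW] at this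
  split_ifs at this <;> omega

lemma wD_ne_wE (hz : 4 ≤ z) : wD z ≠ wE z := by
  intro h
  have := congrArg (List.count 2) h
  simp only [wD, wE, List.count_append, count_chainW] at this
  split_ifs at this <;> omega

lemma wC_ne_wD (hz : 4 ≤ z) : wC z ≠ wD z := by
  intro h
  have := congrArg (List.count 3) h
  simp only [wC, wD, List.count_append, count_chainW] at this
  split_ifs at this <;> omega

lemma wC_ne_wE (hz : 4 ≤ z) : wC z ≠ wE z := by
  intro h
  have := congrArg (List.count 2) h
  simp only [wC, wE, List.count_append, count_chainW] at this
  split_ifs at this <;> omega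

lemma chainW_eq_map (a k : ℕ) : chainW a k = (List.range k).map (fun j => a + j) := by
  induction k generalizing a with
  | zero => simp
  | succ k ih =>
    rw [List.range_succ_eq_map, chainW_succ, ih (a+1)]
    simp only [List.map_cons, List.map_map, Nat.add_zero]
    congr 1
    apply List.map_congr_left
    intro j hj
    simp [Function.comp]
    omega

lemma wC_eq_beta (hz : 4 ≤ z) : wC z = [1, 2, 3] ++ (List.range (z - 1)).map (· + 1) := by
  rw [wC, chainW_eq_map 1 (z-1)]
  congr 1
  apply List.map_congr_left
  intro j hj
  omega

lemma len_beta (hz : 4 ≤ z) : ([1, 2, 3] ++ (List.range (z - 1)).map (· + 1)).length = z + 2 := by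
  simp; omega


/-- For `z ≥ 4`, `n ≥ z+2`, and any content `κ` with `Σᵢ κᵢ = n`, there is an injection
`ι : 𝒴_{(2,z)}(κ) → 𝒴_{(3,z−1)}(κ)` preserving the number of runs, whose image is exactly
`𝒴_{(3,z−1)}(κ) \ 𝒴_{(3,z−1)}(κ; β)` where `β = (1,2,3,1,2,…,z−1)`. -/
theorem exists_injection_yam_2z_3zsub1 (z n : ℕ) (κ : ℕ →₀ ℕ) (hz : 4 ≤ z) (hn : z + 2 ≤ n)
    (hκ0 : κ 0 = 0) (hκ : κ.sum (fun _ m => m) = n) :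
    ∃ ι : List ℕ → List ℕ,
      Set.InjOn ι (yamRT κ [2, z]) ∧
      (∀ y ∈ yamRT κ [2, z], (runLengths (ι y)).length = (runLengths y).length) ∧
      ι '' yamRT κ [2, z]
        = yamRT κ [3, z - 1] \
            (yamRT κ [3, z - 1] ∩ yamPre κ ([1, 2, 3] ++ (List.range (z - 1)).map (· + 1))) := by
  refine ⟨fun y => if wA z <+: y then wD z ++ y.drop (z+2) else wE z ++ y.drop (z+2), ?_, ?_, ?_⟩
  all_goals {
    have h0 : ∀ y : List ℕ, MemYam κ y → (0:ℕ) ∉ y := by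
      intro y hy
      exact List.count_eq_zero.mp (by rw [hy.1 0]; exact_mod_cast hκ0)
    have hdropA : ∀ t : List ℕ, (wA z ++ t).drop (z+2) = t := by
      intro t; rw [← len_wA hz, List.drop_left]
    have hdropB : ∀ t : List ℕ, (wB z ++ t).drop (z+2) = t := by
      intro t; rw [← len_wB hz, List.drop_left]
    have hnotAB : ∀ t : List ℕ, ¬ (wA z <+: wB z ++ t) := by
      intro t hpre
      exact wA_ne_wB hz (pfx_eq hpre (List.prefix_append _ _) (by rw [len_wA hz, len_wB hz]))
    have hiA : ∀ t : List ℕ,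
        (if wA z <+: wA z ++ t then wD z ++ (wA z ++ t).drop (z+2)
          else wE z ++ (wA z ++ t).drop (z+2)) = wD z ++ t := by
      intro t; rw [if_pos (List.prefix_append _ _), hdropA]
    have hiB : ∀ t : List ℕ,
        (if wA z <+: wB z ++ t then wD z ++ (wB z ++ t).drop (z+2)
          else wE z ++ (wB z ++ t).drop (z+2)) = wE z ++ t := by
      intro t; rw [if_neg (hnotAB t), hdropB]
    have hAD : ∀ t : List ℕ, (∀ u ∈ t.head?, ¬ (z:ℕ) < u) → MemYam κ (wA z ++ t) →
        MemYam κ (wD z ++ t) := by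
      intro t ht h
      exact memYam_trans κ (wA z) (wD z) t 2 z 3 (z-1)
        (by rw [len_wA hz, len_wD hz]) (count_wA_eq_wD hz) (yam_wD hz)
        (rl_wA hz t ht) (rl_wD hz t ht) (by omega) (by omega) h
    have hDA : ∀ t : List ℕ, (∀ u ∈ t.head?, ¬ (z:ℕ) < u) → MemYam κ (wD z ++ t) →
        MemYam κ (wA z ++ t) := by
      intro t ht h
      exact memYam_trans κ (wD z) (wA z) t 3 (z-1) 2 z
        (by rw [len_wA hz, len_wD hz]) (fun i => (count_wA_eq_wD hz i).symm) (yam_wA hz)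
        (rl_wD hz t ht) (rl_wA hz t ht) (by omega) (by omega) h
    have hBE : ∀ t : List ℕ, (∀ u ∈ t.head?, ¬ (z+1:ℕ) < u) → MemYam κ (wB z ++ t) →
        MemYam κ (wE z ++ t) := by
      intro t ht h
      exact memYam_trans κ (wB z) (wE z) t 2 z 3 (z-1)
        (by rw [len_wB hz, len_wE hz]) (count_wB_eq_wE hz) (yam_wE hz)
        (rl_wB hz t ht) (rl_wE hz t ht) (by omega) (by omega) h
    have hEB : ∀ t : List ℕ, (∀ u ∈ t.head?, ¬ (z+1:ℕ) < u) → MemYam κ (wE z ++ t) →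
        MemYam κ (wB z ++ t) := by
      intro t ht h
      exact memYam_trans κ (wE z) (wB z) t 3 (z-1) 2 z
        (by rw [len_wB hz, len_wE hz]) (fun i => (count_wB_eq_wE hz i).symm) (yam_wB hz)
        (rl_wE hz t ht) (rl_wB hz t ht) (by omega) (by omega) h
    first
    | -- InjOn
      (intro y1 h1 y2 h2 heq
       obtain ⟨t1, hc1⟩ := structure_2z hz y1 (h0 y1 h1.1) h1.1.2.1 h1.2
       obtain ⟨t2, hc2⟩ := structure_2z hz y2 (h0 y2 h2.1) h2.1.2.1 h2.2
       rcases hc1 with ⟨rfl, hb1⟩ | ⟨rfl, hb1⟩ <;> rcases hc2 with ⟨rfl, hb2⟩ | ⟨rfl, hb2⟩ <;>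
         simp only [hiA, hiB] at heq
       · rw [List.append_cancel_left heq]
       · exact absurd (pfx_eq (heq ▸ List.prefix_append (wD z) t1) (List.prefix_append _ _)
           (by rw [len_wD hz, len_wE hz])) (wD_ne_wE hz)
       · exact absurd (pfx_eq (heq ▸ List.prefix_append (wE z) t1) (List.prefix_append _ _)
           (by rw [len_wD hz, len_wE hz])).symm (wD_ne_wE hz)
       · rw [List.append_cancel_left heq])
    | -- run length count
      (intro y hy
       obtain ⟨t, hc⟩ := structure_2z hz y (h0 y hy.1) hy.1.2.1 hy.2
       rcases hc with ⟨rfl, hb⟩ | ⟨rfl, hb⟩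
       · simp only [hiA]
         rw [rl_wD hz t hb, rl_wA hz t hb]
         by_cases ht : t = [] <;> simp [ht]
       · simp only [hiB]
         rw [rl_wE hz t hb, rl_wB hz t hb]
         by_cases ht : t = [] <;> simp [ht])
    | -- image
      (ext w
       constructor
       · rintro ⟨y, hy, rfl⟩
         obtain ⟨t, hc⟩ := structure_2z hz y (h0 y hy.1) hy.1.2.1 hy.2
         rcases hc with ⟨rfl, hb⟩ | ⟨rfl, hb⟩
         · simp only [hiA]
           have hmem : MemYam κ (wD z ++ t) := hAD t hb hy.1
           have hpre : [3, z-1] <+: runLengths (wD z ++ t) := by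
             rw [rl_wD hz t hb]
             by_cases ht : t = [] <;> simp [ht]
           refine ⟨⟨hmem, hpre⟩, ?_⟩
           rintro ⟨-, -, hβ⟩
           have : ([1, 2, 3] ++ (List.range (z - 1)).map (· + 1)) = wD z :=
             pfx_eq hβ (List.prefix_append _ _) (by rw [len_beta hz, len_wD hz])
           rw [← wC_eq_beta hz] at this
           exact wC_ne_wD hz this
         · simp only [hiB]
           have hmem : MemYam κ (wE z ++ t) := hBE t hb hy.1
           have hpre : [3, z-1] <+: runLengths (wE z ++ t) := by
             rw [rl_wE hz t hb]
             by_cases ht : t = [] <;> simp [ht]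
           refine ⟨⟨hmem, hpre⟩, ?_⟩
           rintro ⟨-, -, hβ⟩
           have : ([1, 2, 3] ++ (List.range (z - 1)).map (· + 1)) = wE z :=
             pfx_eq hβ (List.prefix_append _ _) (by rw [len_beta hz, len_wE hz])
           rw [← wC_eq_beta hz] at this
           exact wC_ne_wE hz this
       · rintro ⟨hw, hnot⟩
         obtain ⟨t, hc⟩ := structure_3z hz w (h0 w hw.1) hw.1.2.1 hw.2
         rcases hc with ⟨rfl, hb⟩ | ⟨rfl, hb⟩ | ⟨rfl, hb⟩
         · exact absurd ⟨hw, hw.1, by rw [wC_eq_beta hz]; exact List.prefix_append _ _⟩ hnot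
         · have hy : MemYam κ (wA z ++ t) := hDA t hb hw.1
           have hyp : [2, z] <+: runLengths (wA z ++ t) := by
             rw [rl_wA hz t hb]
             by_cases ht : t = [] <;> simp [ht]
           exact ⟨wA z ++ t, ⟨hy, hyp⟩, hiA t⟩
         · have hy : MemYam κ (wB z ++ t) := hEB t hb hw.1
           have hyp : [2, z] <+: runLengths (wB z ++ t) := by
             rw [rl_wB hz t hb]
             by_cases ht : t = [] <;> simp [ht]
           exact ⟨wB z ++ t, ⟨hy, hyp⟩, hiB t⟩)
  }

end
end
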